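/- arXiv:1108.0627 — 8 statements merged into one kernel-verified Lean document; each statement's English description precedes it below -/
import Mathlib

section
/- Let B be a compact convex subset of ℝ^m and let A be a convex subset of B such that the closure of A contains all exposed extreme points of B. Then A contains the interior of B. -/
open Set

/-- A farthest point of a compact set from any point `z` is an exposed point. -/
lemma farthest_exposed {m : ℕ} {B : Set (EuclideanSpace ℝ (Fin m))}
    (z w : EuclideanSpace ℝ (Fin m)) (hw : w ∈ B)
    (hmax : ∀ y ∈ B, dist y z ≤ dist w z) : w ∈ B.exposedPoints ℝ := by
  rcases eq_or_ne w z with rfl | hwz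
  · refine ⟨hw, 0, fun y hy => ⟨le_rfl, fun _ => ?_⟩⟩
    have h0 := hmax y hy
    rw [dist_self] at h0
    exact dist_eq_zero.mp (le_antisymm h0 dist_nonneg)
  · refine ⟨hw, innerSL ℝ (w - z), fun y hy => ?_⟩
    have hkey : inner ℝ (w - z) (y - z) ≤ ‖w - z‖ ^ 2 := by
      calc inner ℝ (w - z) (y - z) ≤ ‖w - z‖ * ‖y - z‖ := real_inner_le_norm _ _
        _ ≤ ‖w - z‖ * ‖w - z‖ := by
            have h1 := hmax y hy
            rw [dist_eq_norm, dist_eq_norm] at h1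
            exact mul_le_mul_of_nonneg_left h1 (norm_nonneg _)
        _ = ‖w - z‖ ^ 2 := (sq ‖w - z‖).symm
    have hle : (innerSL ℝ (w - z)) y ≤ (innerSL ℝ (w - z)) w := by
      have h1 : (inner ℝ (w - z) y : ℝ) - inner ℝ (w - z) z ≤ ‖w - z‖ ^ 2 := by
        rw [← inner_sub_right]; exact hkey
      have h2 : (inner ℝ (w - z) w : ℝ) - inner ℝ (w - z) z = ‖w - z‖ ^ 2 := by
        rw [← inner_sub_right, real_inner_self_eq_norm_sq]
      simp only [innerSL_apply_apply]
      linarith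
    refine ⟨hle, fun hge => ?_⟩
    have heq : (inner ℝ (w - z) (y - z) : ℝ) = ‖w - z‖ ^ 2 := by
      have h2 : (inner ℝ (w - z) w : ℝ) - inner ℝ (w - z) z = ‖w - z‖ ^ 2 := by
        rw [← inner_sub_right, real_inner_self_eq_norm_sq]
      have : (innerSL ℝ (w - z)) y = (innerSL ℝ (w - z)) w := le_antisymm hle hge
      simp only [innerSL_apply_apply] at this
      rw [inner_sub_right]
      linarith
    have hnorm : ‖y - z‖ ≤ ‖w - z‖ := by
      have := hmax y hy; rwa [dist_eq_norm, dist_eq_norm] at this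
    have : ‖y - w‖ ^ 2 ≤ 0 := by
      have hexp : ‖y - w‖ ^ 2 = ‖y - z‖ ^ 2 - 2 * inner ℝ (w - z) (y - z) + ‖w - z‖ ^ 2 := by
        have : y - w = (y - z) - (w - z) := by abel
        rw [this, ← real_inner_self_eq_norm_sq, ← real_inner_self_eq_norm_sq,
          ← real_inner_self_eq_norm_sq, inner_sub_sub_self]
        rw [real_inner_comm (y - z) (w - z)]
        ring
      have hsq : ‖y - z‖ ^ 2 ≤ ‖w - z‖ ^ 2 :=
        pow_le_pow_left₀ (norm_nonneg _) hnorm 2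
      rw [hexp, heq]
      linarith
    have : ‖y - w‖ = 0 := by
      have h0 := sq_nonneg ‖y - w‖
      nlinarith [norm_nonneg (y - w)]
    have : y - w = 0 := norm_eq_zero.mp this
    exact sub_eq_zero.mp this

/-- Lemma 2.1: if the closure of a convex subset `A` of a compact convex set `B`
contains all exposed points of `B`, then `A` contains the interior of `B`. -/
theorem stmt0 {m : ℕ} (B A : Set (EuclideanSpace ℝ (Fin m)))
    (hBc : IsCompact B) (hBconv : Convex ℝ B)
    (hAB : A ⊆ B) (hAconv : Convex ℝ A)
    (hexp : B.exposedPoints ℝ ⊆ closure A) :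
    interior B ⊆ A := by
  -- Step 1: B ⊆ closure A (Straszewicz-style argument)
  have hBsub : B ⊆ closure A := by
    intro x hx
    by_contra hxC
    obtain ⟨f, u, hfu, hux⟩ :=
      geometric_hahn_banach_closed_point (hAconv.closure) isClosed_closure hxC
    -- Riesz representation of f
    set v : EuclideanSpace ℝ (Fin m) := (InnerProductSpace.toDual ℝ (EuclideanSpace ℝ (Fin m))).symm f with hv
    have hfv : ∀ y : EuclideanSpace ℝ (Fin m), f y = inner ℝ v y := by
      intro y
      have := (InnerProductSpace.toDual ℝ (EuclideanSpace ℝ (Fin m))).apply_symm_apply f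
      rw [← this]; rfl
    -- B is bounded
    obtain ⟨R, hR0, hR⟩ : ∃ R : ℝ, 0 < R ∧ ∀ y ∈ B, ‖y‖ ≤ R := by
      obtain ⟨R, hR⟩ := hBc.isBounded.exists_norm_le
      refine ⟨max R 0 + 1, by positivity, fun y hy => ?_⟩
      have := le_max_left R 0
      have := hR y hy
      linarith
    -- pick t large
    have hfxu : (0:ℝ) < f x - u := by linarith
    obtain ⟨t, ht0, htlarge⟩ : ∃ t : ℝ, 0 < t ∧ R ^ 2 / (2 * t) < f x - u := by
      have hd : (0:ℝ) ≤ R ^ 2 / (f x - u) := div_nonneg (sq_nonneg R) hfxu.le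
      refine ⟨R ^ 2 / (f x - u) + 1, by linarith, ?_⟩
      rw [div_lt_iff₀ (by linarith)]
      have hc : (f x - u) * (R ^ 2 / (f x - u)) = R ^ 2 :=
        mul_div_cancel₀ _ (ne_of_gt hfxu)
      nlinarith [sq_nonneg R]
    -- farthest point of B from z := -t • v
    set z : EuclideanSpace ℝ (Fin m) := -(t • v) with hz
    obtain ⟨w, hwB, hwmax⟩ :=
      hBc.exists_isMaxOn ⟨x, hx⟩ ((continuous_id.dist continuous_const).continuousOn)
    have hwexp : w ∈ B.exposedPoints ℝ := farthest_exposed z w hwB (fun y hy => hwmax hy)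
    have hwC : w ∈ closure A := hexp hwexp
    have hfw : f w < u := hfu w hwC
    -- but dist w z ≥ dist x z forces f w large
    have hdist : dist x z ≤ dist w z := hwmax hx
    have hexpand : ∀ y : EuclideanSpace ℝ (Fin m), dist y z ^ 2 = ‖y‖ ^ 2 + 2 * t * f y + t ^ 2 * ‖v‖ ^ 2 := by
      intro y
      have hdz : dist y z = ‖y + t • v‖ := by rw [dist_eq_norm, hz, sub_neg_eq_add]
      rw [hdz, norm_add_sq_real, real_inner_smul_right, norm_smul, Real.norm_eq_abs,
        abs_of_pos ht0, hfv y, real_inner_comm]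
      ring
    have hsq : dist x z ^ 2 ≤ dist w z ^ 2 :=
      pow_le_pow_left₀ dist_nonneg hdist 2
    rw [hexpand x, hexpand w] at hsq
    have hxnorm : (0:ℝ) ≤ ‖x‖ ^ 2 := sq_nonneg _
    have hwnorm : ‖w‖ ^ 2 ≤ R ^ 2 := by
      have := hR w hwB
      nlinarith [norm_nonneg w]
    -- f w ≥ f x - R^2/(2t) > u
    have ht2 : R ^ 2 < (f x - u) * (2 * t) := by
      rwa [div_lt_iff₀ (by positivity)] at htlarge
    have : u < f w := by nlinarith
    linarith
  -- Step 2: closure A = B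
  have hclA : closure A = B :=
    le_antisymm (closure_minimal hAB hBc.isClosed) hBsub
  -- Step 3: interior B ⊆ A
  intro x hx
  rw [← hclA] at hx
  -- A is nonempty
  have hAne : A.Nonempty := by
    by_contra h
    rw [not_nonempty_iff_eq_empty] at h
    rw [h, closure_empty] at hx
    simp at hx
  -- interior A is nonempty: affine span of A is top
  have hspan : affineSpan ℝ A = ⊤ := by
    have h1 : affineSpan ℝ (closure A) = ⊤ := by
      rw [← (hAconv.closure).interior_nonempty_iff_affineSpan_eq_top]
      exact ⟨x, hx⟩
    have h2 : closure A ⊆ (affineSpan ℝ A : Set (EuclideanSpace ℝ (Fin m))) :=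
      closure_minimal (subset_affineSpan ℝ A) (affineSpan ℝ A).closed_of_finiteDimensional
    have h3 : affineSpan ℝ (closure A) ≤ affineSpan ℝ A := affineSpan_le.mpr h2
    exact top_le_iff.mp (h1 ▸ h3)
  have hintA : (interior A).Nonempty :=
    hAconv.interior_nonempty_iff_affineSpan_eq_top.mpr hspan
  obtain ⟨y, hy⟩ := hintA
  -- if x = y we're done
  rcases eq_or_ne x y with rfl | hxy
  · exact interior_subset hy
  -- otherwise push x slightly past itself from y; stay in closure A
  obtain ⟨ε, hε, hball⟩ := Metric.isOpen_iff.mp isOpen_interior x hx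
  have hxyn : (0:ℝ) < ‖x - y‖ := by
    rw [norm_pos_iff, sub_ne_zero]; exact hxy
  set δ : ℝ := min (ε / (2 * ‖x - y‖)) 1 with hδdef
  have hδ0 : 0 < δ := lt_min (by positivity) one_pos
  set zz : EuclideanSpace ℝ (Fin m) := x + δ • (x - y) with hzz
  have hzzmem : zz ∈ closure A := by
    apply interior_subset
    apply hball
    rw [Metric.mem_ball, dist_eq_norm, hzz]
    have : x + δ • (x - y) - x = δ • (x - y) := by abel
    rw [this, norm_smul, Real.norm_eq_abs, abs_of_pos hδ0]
    calc δ * ‖x - y‖ ≤ ε / (2 * ‖x - y‖) * ‖x - y‖ :=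
          mul_le_mul_of_nonneg_right (min_le_left _ _) (norm_nonneg _)
      _ = ε / 2 := by field_simp
      _ < ε := by linarith
  -- x ∈ openSegment y zz
  have hxseg : x ∈ openSegment ℝ y zz := by
    refine ⟨δ / (1 + δ), 1 / (1 + δ), by positivity, by positivity, ?_, ?_⟩
    · field_simp
      ring
    · rw [hzz]
      have h1δ : (1:ℝ) + δ ≠ 0 := by positivity
      rw [smul_add, smul_smul]
      have : (δ / (1 + δ)) • y + ((1 / (1 + δ)) • x + (1 / (1 + δ) * δ) • (x - y)) =
          ((δ / (1 + δ)) - (1 / (1 + δ) * δ)) • y + ((1 / (1 + δ)) + (1 / (1 + δ) * δ)) • x := by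
        rw [smul_sub]; module
      rw [this]
      have e1 : (δ / (1 + δ)) - (1 / (1 + δ) * δ) = 0 := by field_simp; ring
      have e2 : (1 / (1 + δ)) + (1 / (1 + δ) * δ) = 1 := by field_simp
      rw [e1, e2, zero_smul, one_smul, zero_add]
  have := hAconv.openSegment_interior_closure_subset_interior hy hzzmem hxseg
  exact interior_subset this
end

section
/- Let B be a compact convex subset of ℝ^m. Then the set of exposed points of B is dense in the set of extreme points of B (Straszewicz's theorem). -/
open Set

open scoped RealInnerProductSpace

/-- The convex hull of a compact set in Euclidean space is compact. -/
lemma isCompact_convexHull_of_isCompact {m : ℕ} {K : Set (EuclideanSpace ℝ (Fin m))}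
    (hK : IsCompact K) : IsCompact (convexHull ℝ K) := by
  classical
  rcases K.eq_empty_or_nonempty with rfl | ⟨z₀, hz₀⟩
  · simp
  set n := m + 1 with hn
  set F : (Fin n → ℝ) × (Fin n → EuclideanSpace ℝ (Fin m)) → EuclideanSpace ℝ (Fin m) :=
    fun p => ∑ i, p.1 i • p.2 i with hF
  set S : Set ((Fin n → ℝ) × (Fin n → EuclideanSpace ℝ (Fin m))) :=
    (stdSimplex ℝ (Fin n)) ×ˢ (Set.univ.pi fun _ => K) with hSdef
  have hS : IsCompact S := IsCompact.prod (isCompact_stdSimplex ..) (isCompact_univ_pi fun _ => hK)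
  have hfc : Continuous F := by
    apply continuous_finset_sum
    intro i _
    exact ((continuous_apply i).comp continuous_fst).smul
      ((continuous_apply i).comp continuous_snd)
  have himg : convexHull ℝ K = F '' S := by
    apply Subset.antisymm
    · intro x hx
      obtain ⟨ι, hfin, z, w, hrange, hai, hwpos, hwsum, hxeq⟩ :=
        eq_pos_convex_span_of_mem_convexHull hx
      have hc : Fintype.card ι ≤ n := by
        have h1 := hai.card_le_finrank_succ
        have h2 : Module.finrank ℝ (vectorSpan ℝ (Set.range z)) ≤ m := by
          have := Submodule.finrank_le (vectorSpan ℝ (Set.range z))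
          simpa [finrank_euclideanSpace_fin] using this
        omega
      set e := Fintype.equivFin ι with he
      set f : ι → Fin n := fun i => Fin.castLE hc (e i) with hf2
      have hinj : Function.Injective f :=
        (Fin.castLE_injective hc).comp e.injective
      set w' : Fin n → ℝ := Function.extend f w (fun _ => 0) with hw'
      set g : Fin n → EuclideanSpace ℝ (Fin m) := Function.extend f z (fun _ => z₀) with hg
      have hwapp : ∀ i : ι, w' (f i) = w i := fun i => hinj.extend_apply _ _ _
      have hwout : ∀ j, (¬ ∃ i, f i = j) → w' j = 0 := fun j hj =>
        Function.extend_apply' _ _ _ hj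
      have hgapp : ∀ i : ι, g (f i) = z i := fun i => hinj.extend_apply _ _ _
      have hgout : ∀ j, (¬ ∃ i, f i = j) → g j = z₀ := fun j hj =>
        Function.extend_apply' _ _ _ hj
      have hmem : ∀ j : Fin n, j ∈ (Finset.univ.map ⟨f, hinj⟩ : Finset (Fin n)) ↔ ∃ i, f i = j := by
        intro j; simp [Finset.mem_map]
      have hsum_eq : ∀ {M : Type} [inst : AddCommMonoid M] (G : Fin n → M),
          (∀ j, (¬ ∃ i, f i = j) → G j = 0) → ∑ j, G j = ∑ i, G (f i) := by
        intro M inst G hG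
        have h1 := Finset.sum_map Finset.univ ⟨f, hinj⟩ G
        simp only [Function.Embedding.coeFn_mk] at h1
        rw [← h1]
        refine (Finset.sum_subset (Finset.subset_univ _) ?_).symm
        intro j _ hj
        exact hG j (by simpa [hmem] using hj)
      refine ⟨(w', g), ⟨⟨?_, ?_⟩, ?_⟩, ?_⟩
      · intro j
        show 0 ≤ w' j
        by_cases hj : ∃ i, f i = j
        · obtain ⟨i, rfl⟩ := hj
          rw [hwapp]
          exact (hwpos i).le
        · rw [hwout j hj]
      · show ∑ j, w' j = 1
        rw [hsum_eq w' hwout]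
        simp only [hwapp]
        exact hwsum
      · intro j _
        show g j ∈ K
        by_cases hj : ∃ i, f i = j
        · obtain ⟨i, rfl⟩ := hj
          rw [hgapp]
          exact hrange ⟨i, rfl⟩
        · rw [hgout j hj]
          exact hz₀
      · show ∑ j, w' j • g j = x
        rw [hsum_eq (fun j => w' j • g j) (fun j hj => by
          show w' j • g j = 0
          rw [hwout j hj, zero_smul])]
        simp only [hwapp, hgapp]
        exact hxeq
    · rintro _ ⟨⟨w, g⟩, ⟨⟨hw0, hw1⟩, hgK⟩, rfl⟩
      exact (convex_convexHull ℝ K).sum_mem (fun i _ => hw0 i) hw1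
        (fun i _ => subset_convexHull ℝ K (hgK i (mem_univ i)))
  rw [himg]
  exact hS.image hfc

/-- A farthest point of a set from any point is an exposed point. -/
lemma farthest_mem_exposedPoints {m : ℕ} {B : Set (EuclideanSpace ℝ (Fin m))}
    {z y : EuclideanSpace ℝ (Fin m)} (hy : y ∈ B)
    (hmax : ∀ w ∈ B, ‖w - z‖ ≤ ‖y - z‖) : y ∈ B.exposedPoints ℝ := by
  refine ⟨hy, innerSL ℝ (y - z), fun w hw => ?_⟩
  have key : ∀ u ∈ B, ⟪y - z, u - z⟫ ≤ ‖y - z‖ ^ 2 := by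
    intro u hu
    calc ⟪y - z, u - z⟫ ≤ ‖y - z‖ * ‖u - z‖ := real_inner_le_norm _ _
      _ ≤ ‖y - z‖ * ‖y - z‖ := by
          exact mul_le_mul_of_nonneg_left (hmax u hu) (norm_nonneg _)
      _ = ‖y - z‖ ^ 2 := by ring
  have hle : ⟪y - z, w⟫ ≤ ⟪y - z, y⟫ := by
    have h1 := key w hw
    have h2 : ⟪y - z, y - z⟫ = ‖y - z‖ ^ 2 := real_inner_self_eq_norm_sq _
    have h3 : ⟪y - z, w - z⟫ = ⟪y - z, w⟫ - ⟪y - z, z⟫ := inner_sub_right _ _ _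
    have h4 : ⟪y - z, y - z⟫ = ⟪y - z, y⟫ - ⟪y - z, z⟫ := inner_sub_right _ _ _
    linarith
  refine ⟨hle, fun hge => ?_⟩
  -- equality case
  by_cases hyz : y = z
  · subst hyz
    have h0 : ‖w - y‖ ≤ 0 := by simpa using hmax w hw
    have h1 : ‖w - y‖ = 0 := le_antisymm h0 (norm_nonneg _)
    exact sub_eq_zero.mp (by simpa using h1)
  · have hpos : 0 < ‖y - z‖ := by
      rw [norm_pos_iff]; exact sub_ne_zero_of_ne hyz
    have heq : ⟪y - z, w⟫ = ⟪y - z, y⟫ := le_antisymm hle hge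
    have h3 : ⟪y - z, w - z⟫ = ⟪y - z, w⟫ - ⟪y - z, z⟫ := inner_sub_right _ _ _
    have h4 : ⟪y - z, y - z⟫ = ⟪y - z, y⟫ - ⟪y - z, z⟫ := inner_sub_right _ _ _
    have h2 : ⟪y - z, y - z⟫ = ‖y - z‖ ^ 2 := real_inner_self_eq_norm_sq _
    have hkey : ⟪y - z, w - z⟫ = ‖y - z‖ ^ 2 := by linarith
    -- first, norms are equal
    have hnle : ‖w - z‖ ≤ ‖y - z‖ := hmax w hw
    have hnge : ‖y - z‖ ≤ ‖w - z‖ := by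
      by_contra hlt
      push_neg at hlt
      have := real_inner_le_norm (y - z) (w - z)
      nlinarith
    have hne : ‖w - z‖ = ‖y - z‖ := le_antisymm hnle hnge
    have hcs : ⟪y - z, w - z⟫ = ‖y - z‖ * ‖w - z‖ := by rw [hne]; nlinarith
    rw [inner_eq_norm_mul_iff_real] at hcs
    rw [hne] at hcs
    have := smul_right_injective (EuclideanSpace ℝ (Fin m)) (ne_of_gt hpos) hcs
    have hwz : w - z = y - z := this.symm
    have : w = y := by
      have := congrArg (· + z) hwz
      simpa using this
    exact this

/-- Straszewicz's theorem: for a compact convex `B ⊆ ℝ^m`, the exposed points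
are dense in the extreme points. -/
theorem stmt1 {m : ℕ} (B : Set (EuclideanSpace ℝ (Fin m)))
    (hBc : IsCompact B) (hBconv : Convex ℝ B) :
    B.extremePoints ℝ ⊆ closure (B.exposedPoints ℝ) := by
  intro x hx
  have hxB : x ∈ B := hx.1
  rw [Metric.mem_closure_iff]
  intro ε hε
  set K : Set (EuclideanSpace ℝ (Fin m)) := B \ Metric.ball x ε with hK
  have hKc : IsCompact K := hBc.diff Metric.isOpen_ball
  set C : Set (EuclideanSpace ℝ (Fin m)) := convexHull ℝ K with hC
  have hCc : IsCompact C := isCompact_convexHull_of_isCompact hKc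
  have hCsub : C ⊆ B := convexHull_min diff_subset hBconv
  have hxC : x ∉ C := by
    intro hxC
    have hxext : x ∈ C.extremePoints ℝ :=
      ⟨hxC, fun x₁ hx₁ x₂ hx₂ hseg => hx.2 (hCsub hx₁) (hCsub hx₂) hseg⟩
    have : x ∈ K := extremePoints_convexHull_subset hxext
    exact this.2 (Metric.mem_ball_self hε)
  obtain ⟨l, u, hl, hu⟩ :=
    geometric_hahn_banach_closed_point (convex_convexHull ℝ K) hCc.isClosed hxC
  set v : EuclideanSpace ℝ (Fin m) := (InnerProductSpace.toDual ℝ _).symm l with hv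
  have hvl : ∀ w, ⟪v, w⟫ = l w := fun w => InnerProductSpace.toDual_symm_apply
  set δ : ℝ := l x - u with hδ
  have hδpos : 0 < δ := by simp [hδ]; linarith
  set D : ℝ := Metric.diam B with hD
  have hD0 : 0 ≤ D := Metric.diam_nonneg
  set R : ℝ := (D ^ 2 + 1) / (2 * δ) with hR
  have hRpos : 0 < R := by positivity
  set z : EuclideanSpace ℝ (Fin m) := x - R • v with hz
  -- key estimate: any point of K is strictly closer to z than x is
  have hest : ∀ w ∈ K, ‖w - z‖ < ‖x - z‖ := by
    intro w hwK
    have hwB : w ∈ B := hwK.1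
    have hwC : w ∈ C := subset_convexHull ℝ K hwK
    have hlw : l w < u := hl w hwC
    have hinner : ⟪v, x - w⟫ > δ := by
      have h1 : ⟪v, x⟫ = l x := hvl x
      have h2 : ⟪v, w⟫ = l w := hvl w
      have : ⟪v, x - w⟫ = ⟪v, x⟫ - ⟪v, w⟫ := inner_sub_right _ _ _
      rw [this, h1, h2, hδ]
      linarith
    have hwx : ‖w - x‖ ≤ D := by
      have := Metric.dist_le_diam_of_mem hBc.isBounded hwB hxB
      simpa [dist_eq_norm, hD] using this
    have hxz : x - z = R • v := by rw [hz]; abel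
    have hwz : w - z = (w - x) + R • v := by rw [hz]; abel
    have hxznorm : ‖x - z‖ ^ 2 = R ^ 2 * ‖v‖ ^ 2 := by
      rw [hxz, norm_smul]
      simp [abs_of_pos hRpos]
      ring
    have hwznorm : ‖w - z‖ ^ 2 = ‖w - x‖ ^ 2 + 2 * (R * ⟪w - x, v⟫) + R ^ 2 * ‖v‖ ^ 2 := by
      rw [hwz, norm_add_sq_real, norm_smul, real_inner_smul_right]
      simp [abs_of_pos hRpos]
      ring
    have hip : ⟪w - x, v⟫ = - ⟪v, x - w⟫ := by
      have h0 : (w - x) + (x - w) = 0 := by abel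
      have hadd : ⟪v, w - x⟫ + ⟪v, x - w⟫ = 0 := by
        rw [← inner_add_right, h0, inner_zero_right]
      rw [real_inner_comm]
      linarith
    have hsq : ‖w - z‖ ^ 2 < ‖x - z‖ ^ 2 := by
      rw [hwznorm, hxznorm, hip]
      have hRδ : 2 * (R * δ) = (D ^ 2 + 1) := by
        rw [hR]; field_simp
      have h5 : R * δ < R * ⟪v, x - w⟫ := mul_lt_mul_of_pos_left hinner hRpos
      have h6 : ‖w - x‖ ^ 2 ≤ D ^ 2 := by nlinarith [norm_nonneg (w - x)]
      nlinarith
    exact lt_of_pow_lt_pow_left₀ 2 (norm_nonneg _) hsq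
  -- farthest point from z
  obtain ⟨y, hyB, hymax⟩ := hBc.exists_isMaxOn ⟨x, hxB⟩
    ((continuous_id.sub continuous_const).norm.continuousOn :
      ContinuousOn (fun w => ‖w - z‖) B)
  have hymax' : ∀ w ∈ B, ‖w - z‖ ≤ ‖y - z‖ := fun w hw => hymax hw
  have hyexp : y ∈ B.exposedPoints ℝ := farthest_mem_exposedPoints hyB hymax'
  have hyball : y ∈ Metric.ball x ε := by
    by_contra hyb
    have hyK : y ∈ K := ⟨hyB, hyb⟩
    have h1 := hest y hyK
    have h2 := hymax' x hxB
    linarith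
  exact ⟨y, hyexp, by simpa [dist_comm] using Metric.mem_ball.mp hyball⟩
end

section
/- Let M ⊆ ℝ^n be the closure of a nonempty open set, μ a measure on M absolutely continuous with respect to Lebesgue measure with density positive on M, and f : M → ℝ continuous, positive on M, attaining its maximum at a unique point s ∈ M. Then for every continuous g : M → ℝ, lim_{λ→∞} (∫_M g f^λ dμ)/(∫_M f^λ dμ) = g(s). -/
open MeasureTheory Filter
open scoped ENNReal

/-- Lemma 2.2: `M` is the closure of a nonempty bounded open subset of `ℝ^n`,
`μ` is absolutely continuous w.r.t. Lebesgue measure with density positive on `M`,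
`f` is continuous and positive on `M` with a unique maximizer `s ∈ M`.
Then for every continuous `g`, `(∫_M g f^λ dμ)/(∫_M f^λ dμ) → g(s)` as `λ → ∞`. -/
theorem stmt3 {n : ℕ} (U M : Set (Fin n → ℝ))
    (hU : IsOpen U) (hUne : U.Nonempty) (hUb : Bornology.IsBounded U)
    (hM : M = closure U)
    (ρ : (Fin n → ℝ) → ℝ≥0∞) (hρmeas : Measurable ρ)
    (hρpos : ∀ x ∈ M, 0 < ρ x)
    (μ : Measure (Fin n → ℝ)) (hμ : μ = (volume.restrict M).withDensity ρ)
    [IsFiniteMeasure μ]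
    (f : (Fin n → ℝ) → ℝ) (hfc : ContinuousOn f M)
    (hfpos : ∀ x ∈ M, 0 < f x)
    (s : Fin n → ℝ) (hs : s ∈ M) (hsmax : ∀ x ∈ M, x ≠ s → f x < f s)
    (g : (Fin n → ℝ) → ℝ) (hgc : ContinuousOn g M) :
    Tendsto
      (fun lam : ℕ =>
        (∫ x in M, g x * (f x) ^ (lam : ℝ) ∂μ) / (∫ x in M, (f x) ^ (lam : ℝ) ∂μ))
      atTop (nhds (g s)) := by
  have hUM : U ⊆ M := hM ▸ subset_closure
  have hMc : IsCompact M := by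
    rw [hM]; exact hUb.isCompact_closure
  have hMmeas : MeasurableSet M := hMc.isClosed.measurableSet
  -- μ gives positive mass to every open set containing `s` intersected with `M`
  have key : ∀ u, IsOpen u → s ∈ u → 0 < μ (u ∩ M) := by
    intro u hu hsu
    obtain ⟨y, hyu, hyU⟩ := _root_.mem_closure_iff.1 (hM ▸ hs) u hu hsu
    have hA : IsOpen (u ∩ U) := hu.inter hU
    have hAM : u ∩ U ⊆ u ∩ M := Set.inter_subset_inter_right _ hUM
    have hpos : 0 < μ (u ∩ U) := by
      rw [hμ, withDensity_apply _ hA.measurableSet,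
        Measure.restrict_restrict hA.measurableSet]
      rw [setLIntegral_pos_iff hρmeas]
      have hsub : u ∩ U ∩ M ⊆ Function.support ρ ∩ (u ∩ U ∩ M) := by
        intro x hx
        exact ⟨(hρpos x hx.2).ne', hx⟩
      calc (0 : ℝ≥0∞) < volume (u ∩ U) := hA.measure_pos volume ⟨y, hyu, hyU⟩
        _ = volume (u ∩ U ∩ M) := by
            rw [Set.inter_eq_self_of_subset_left ((Set.inter_subset_right).trans hUM)]
        _ ≤ volume (Function.support ρ ∩ (u ∩ U ∩ M)) := measure_mono hsub
    exact hpos.trans_le (measure_mono hAM)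
  have hgint : IntegrableOn g M μ := hgc.integrableOn_compact hMc
  have main :=
    tendsto_setIntegral_pow_smul_of_unique_maximum_of_isCompact_of_measure_nhdsWithin_pos
      (μ := μ) (x₀ := s) hMc key hfc hsmax (fun x hx => (hfpos x hx).le) (hfpos s hs) hs
      hgint (hgc s hs)
  refine main.congr fun lam => ?_
  simp only [smul_eq_mul]
  rw [div_eq_inv_mul]
  congr 1
  · norm_num [Real.rpow_natCast]
  · refine setIntegral_congr_fun hMmeas fun x _ => ?_
    rw [Real.rpow_natCast, mul_comm]
end

section
/- With M, μ, f as above (f continuous, 0 < f ≤ 1 on M, unique maximizer s with f(s) = 1, μ positive on nonempty open sets), for every ε > 0 the probability measures ν_λ(B) = (∫_M f^λ dμ)^{-1} ∫_B f^λ dμ satisfy lim_{λ→∞} ν_λ({x ∈ M : f(x) < 1 − ε}) = 0. -/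
open MeasureTheory Filter

/-- With `M` compact (closure of an open set), `μ` a finite Borel measure positive on
nonempty relatively open subsets of `M`, and `f` continuous with `0 < f ≤ 1` on `M`,
whose supremum `1` is attained at a unique point, the normalized measures
`ν_λ = f^λ dμ / ∫_M f^λ dμ` satisfy `ν_λ({x ∈ M : f x < 1 - ε}) → 0` for every `ε > 0`. -/
theorem stmt4 {n : ℕ} (U M : Set (Fin n → ℝ))
    (hU : IsOpen U) (hM : M = closure U) (hMc : IsCompact M)
    (μ : Measure (Fin n → ℝ)) [IsFiniteMeasure μ]
    (hμpos : ∀ V : Set (Fin n → ℝ), IsOpen V → (V ∩ M).Nonempty → 0 < μ (V ∩ M))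
    (hμsupp : μ Mᶜ = 0)
    (f : (Fin n → ℝ) → ℝ) (hfc : ContinuousOn f M)
    (hf0 : ∀ x ∈ M, 0 < f x) (hf1 : ∀ x ∈ M, f x ≤ 1)
    (s : Fin n → ℝ) (hs : s ∈ M) (hfs : f s = 1)
    (hsmax : ∀ x ∈ M, x ≠ s → f x < 1) :
    ∀ ε : ℝ, 0 < ε →
      Tendsto
        (fun lam : ℕ =>
          (∫ x in {x ∈ M | f x < 1 - ε}, (f x) ^ (lam : ℝ) ∂μ) /
            (∫ x in M, (f x) ^ (lam : ℝ) ∂μ))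
        atTop (nhds 0) := by
  intro ε hε
  have hMclosed : IsClosed M := hM ▸ isClosed_closure
  have hMmeas : MeasurableSet M := hMclosed.measurableSet
  -- replace ε by ε' = min ε (1/2)
  set ε' : ℝ := min ε (1/2) with hε'def
  have hε'pos : 0 < ε' := lt_min hε (by norm_num)
  have hε'le : ε' ≤ 1/2 := min_le_right _ _
  set a : ℝ := 1 - ε' with ha_def
  set b : ℝ := 1 - ε' / 2 with hb_def
  have ha0 : 0 ≤ a := by simp only [ha_def]; linarith
  have hb0 : 0 < b := by simp only [hb_def]; linarith
  have hab : a < b := by simp only [ha_def, hb_def]; linarith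
  have hb1 : b < 1 := by simp only [hb_def]; linarith
  -- the bad set A is measurable
  set A : Set (Fin n → ℝ) := {x ∈ M | f x < 1 - ε} with hA_def
  obtain ⟨u, hu_open, hu_eq⟩ := continuousOn_iff'.1 hfc (Set.Iio (1 - ε)) isOpen_Iio
  have hA_eq : A = u ∩ M := by
    rw [← hu_eq]
    ext x
    simp [hA_def, Set.mem_setOf_eq, and_comm]
  have hAmeas : MeasurableSet A := hA_eq ▸ hu_open.measurableSet.inter hMmeas
  have hAM : A ⊆ M := fun x hx => hx.1
  -- bound on A : f x ≤ a
  have hfA : ∀ x ∈ A, f x ≤ a := by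
    intro x hx
    have h1 : f x < 1 - ε := hx.2
    have : ε' ≤ ε := min_le_left _ _
    simp only [ha_def]; linarith
  -- neighborhood of s where f > b
  have hcw : ContinuousWithinAt f M s := hfc s hs
  have hev : ∀ᶠ x in nhdsWithin s M, b < f x := by
    have : Set.Ioi b ∈ nhds (f s) := by
      apply Ioi_mem_nhds; rw [hfs]; exact hb1
    exact hcw this
  obtain ⟨V, hV_open, hsV, hVsub⟩ := mem_nhdsWithin.1 hev
  have hVM_ne : (V ∩ M).Nonempty := ⟨s, hsV, hs⟩
  have hVM_pos : 0 < μ (V ∩ M) := hμpos V hV_open hVM_ne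
  set c : ℝ := (μ (V ∩ M)).toReal with hc_def
  have hc_pos : 0 < c := ENNReal.toReal_pos hVM_pos.ne' (measure_ne_top μ _)
  have hVMmeas : MeasurableSet (V ∩ M) := hV_open.measurableSet.inter hMmeas
  set m : ℝ := (μ M).toReal with hm_def
  have hm0 : 0 ≤ m := ENNReal.toReal_nonneg
  -- integrability of f^λ on M
  have hInt : ∀ lam : ℕ, IntegrableOn (fun x => (f x) ^ (lam : ℝ)) M μ := by
    intro lam
    have hmeas : AEMeasurable f (μ.restrict M) := hfc.aemeasurable hMmeas
    have hmeas' : AEStronglyMeasurable (fun x => (f x) ^ (lam : ℝ)) (μ.restrict M) :=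
      (hmeas.pow_const (lam : ℝ)).aestronglyMeasurable
    refine ⟨hmeas', ?_⟩
    apply HasFiniteIntegral.mono' (hasFiniteIntegral_const (1 : ℝ))
    filter_upwards [ae_restrict_mem hMmeas] with x hx
    rw [Real.norm_eq_abs, abs_of_nonneg (Real.rpow_nonneg (hf0 x hx).le _)]
    exact Real.rpow_le_one (hf0 x hx).le (hf1 x hx) (Nat.cast_nonneg _)
  -- numerator bound
  have hnum_le : ∀ lam : ℕ,
      (∫ x in A, (f x) ^ (lam : ℝ) ∂μ) ≤ a ^ lam * m := by
    intro lam
    have h := norm_setIntegral_le_of_norm_le_const (C := a ^ (lam : ℝ))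
      (f := fun x => (f x) ^ (lam : ℝ)) (μ := μ) (s := A)
      (measure_lt_top μ A) ?_
    · calc (∫ x in A, (f x) ^ (lam : ℝ) ∂μ)
          ≤ ‖∫ x in A, (f x) ^ (lam : ℝ) ∂μ‖ := Real.le_norm_self _
        _ ≤ a ^ (lam : ℝ) * (μ A).toReal := h
        _ ≤ a ^ lam * m := by
            rw [Real.rpow_natCast]
            apply mul_le_mul_of_nonneg_left _ (pow_nonneg ha0 _)
            exact ENNReal.toReal_mono (measure_ne_top μ _) (measure_mono hAM)
    · intro x hx
      rw [Real.norm_eq_abs, abs_of_nonneg (Real.rpow_nonneg (hf0 x (hAM hx)).le _)]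
      exact Real.rpow_le_rpow (hf0 x (hAM hx)).le (hfA x hx) (Nat.cast_nonneg _)
  -- denominator bound
  have hden_ge : ∀ lam : ℕ,
      b ^ lam * c ≤ (∫ x in M, (f x) ^ (lam : ℝ) ∂μ) := by
    intro lam
    have h1 : b ^ (lam : ℝ) * c ≤ ∫ x in V ∩ M, (f x) ^ (lam : ℝ) ∂μ := by
      apply setIntegral_ge_of_const_le_real hVMmeas (measure_ne_top μ _)
      · intro x hx
        exact Real.rpow_le_rpow hb0.le (hVsub hx).le (Nat.cast_nonneg _)
      · exact (hInt lam).mono_set Set.inter_subset_right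
    have h2 : (∫ x in V ∩ M, (f x) ^ (lam : ℝ) ∂μ) ≤ ∫ x in M, (f x) ^ (lam : ℝ) ∂μ := by
      apply setIntegral_mono_set (hInt lam)
      · filter_upwards [ae_restrict_mem hMmeas] with x hx
        exact Real.rpow_nonneg (hf0 x hx).le _
      · exact HasSubset.Subset.eventuallyLE Set.inter_subset_right
    rw [← Real.rpow_natCast b lam]
    exact h1.trans h2
  have hden_pos : ∀ lam : ℕ, 0 < ∫ x in M, (f x) ^ (lam : ℝ) ∂μ := by
    intro lam
    exact lt_of_lt_of_le (mul_pos (pow_pos hb0 _) hc_pos) (hden_ge lam)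
  have hnum_nonneg : ∀ lam : ℕ, 0 ≤ ∫ x in A, (f x) ^ (lam : ℝ) ∂μ := by
    intro lam
    apply setIntegral_nonneg hAmeas
    intro x hx
    exact Real.rpow_nonneg (hf0 x (hAM hx)).le _
  -- squeeze
  have hlim : Tendsto (fun lam : ℕ => (a / b) ^ lam * (m / c)) atTop (nhds 0) := by
    have h1 : Tendsto (fun lam : ℕ => (a / b) ^ lam) atTop (nhds 0) := by
      apply tendsto_pow_atTop_nhds_zero_of_lt_one (div_nonneg ha0 hb0.le)
      rw [div_lt_one hb0]; exact hab
    simpa using h1.mul_const (m / c)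
  apply tendsto_of_tendsto_of_tendsto_of_le_of_le tendsto_const_nhds hlim
  · intro lam
    exact div_nonneg (hnum_nonneg lam) (hden_pos lam).le
  · intro lam
    calc (∫ x in A, (f x) ^ (lam : ℝ) ∂μ) / (∫ x in M, (f x) ^ (lam : ℝ) ∂μ)
        ≤ (a ^ lam * m) / (b ^ lam * c) := by
          apply div_le_div₀ (by positivity) (hnum_le lam)
            (mul_pos (pow_pos hb0 _) hc_pos) (hden_ge lam)
      _ = (a / b) ^ lam * (m / c) := by
          rw [div_pow]
          field_simp
end

section
/- Let M ⊆ ℝ^n be compact, μ a finite Borel measure on M, V a finite-dimensional inner product space, and 𝓛 : ℝ^n → V continuous. Then the function f(x) = ∫_M exp⟨x, 𝓛(v)⟩ dμ(v) is convex on V, and it is strictly convex if the affine hull of 𝓛(supp μ) is all of V. -/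
open MeasureTheory
open scoped RealInnerProductSpace

/-- The function `f(x) = ∫_M exp⟨x, 𝓛(v)⟩ dμ(v)` is convex, and strictly convex
provided the affine hull of `𝓛(supp μ ∩ M)` is all of `V = ℝ^m`. -/
theorem stmt5 {n m : ℕ} (M : Set (Fin n → ℝ)) (hM : IsCompact M)
    (μ : Measure (Fin n → ℝ)) [IsFiniteMeasure μ] (hμsupp : μ Mᶜ = 0)
    (L : (Fin n → ℝ) → EuclideanSpace ℝ (Fin m)) (hL : Continuous L)
    (f : EuclideanSpace ℝ (Fin m) → ℝ)
    (hf : ∀ x, f x = ∫ v in M, Real.exp ⟪x, L v⟫ ∂μ) :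
    ConvexOn ℝ Set.univ f ∧
      (affineSpan ℝ
          (L '' (M ∩ {v | ∀ V : Set (Fin n → ℝ), IsOpen V → v ∈ V → 0 < μ V})) = ⊤ →
        StrictConvexOn ℝ Set.univ f) := by
  have hcont : ∀ x : EuclideanSpace ℝ (Fin m), Continuous fun v => Real.exp ⟪x, L v⟫ :=
    fun x => Real.continuous_exp.comp (continuous_const.inner hL)
  have hint : ∀ x : EuclideanSpace ℝ (Fin m),
      IntegrableOn (fun v => Real.exp ⟪x, L v⟫) M μ :=
    fun x => ((hcont x).continuousOn).integrableOn_compact hM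
  have key : ∀ (x y : EuclideanSpace ℝ (Fin m)) (a b : ℝ), 0 ≤ a → 0 ≤ b → a + b = 1 →
      ∀ v, Real.exp ⟪a • x + b • y, L v⟫ ≤ a * Real.exp ⟪x, L v⟫ + b * Real.exp ⟪y, L v⟫ := by
    intro x y a b ha hb hab v
    have := convexOn_exp.2 (Set.mem_univ ⟪x, L v⟫) (Set.mem_univ ⟪y, L v⟫) ha hb hab
    simpa only [inner_add_left, real_inner_smul_left, smul_eq_mul] using this
  have hconv : ConvexOn ℝ Set.univ f := by
    refine ⟨convex_univ, fun x _ y _ a b ha hb hab => ?_⟩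
    rw [hf, hf, hf]
    calc ∫ v in M, Real.exp ⟪a • x + b • y, L v⟫ ∂μ
        ≤ ∫ v in M, (a * Real.exp ⟪x, L v⟫ + b * Real.exp ⟪y, L v⟫) ∂μ :=
          integral_mono (hint _) (((hint x).const_mul a).add ((hint y).const_mul b))
            (key x y a b ha hb hab)
      _ = a * ∫ v in M, Real.exp ⟪x, L v⟫ ∂μ + b * ∫ v in M, Real.exp ⟪y, L v⟫ ∂μ := by
          rw [integral_add ((hint x).const_mul a) ((hint y).const_mul b),
            integral_const_mul, integral_const_mul]
      _ = a • (∫ v in M, Real.exp ⟪x, L v⟫ ∂μ) + b • (∫ v in M, Real.exp ⟪y, L v⟫ ∂μ) := by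
          simp only [smul_eq_mul]
  refine ⟨hconv, fun hspan => ⟨convex_univ, fun x _ y _ hxy a b ha hb hab => ?_⟩⟩
  -- find a support point where ⟪x - y, L v⟫ ≠ 0
  obtain ⟨v0, hv0M, hv0s, hv0ne⟩ : ∃ v0, v0 ∈ M ∧
      (∀ V : Set (Fin n → ℝ), IsOpen V → v0 ∈ V → 0 < μ V) ∧ ⟪x - y, L v0⟫ ≠ 0 := by
    by_contra h
    push_neg at h
    have hsub : L '' (M ∩ {v | ∀ V : Set (Fin n → ℝ), IsOpen V → v ∈ V → 0 < μ V}) ⊆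
        ((LinearMap.ker (innerSL ℝ (x - y) : EuclideanSpace ℝ (Fin m) →ₗ[ℝ] ℝ)).toAffineSubspace :
          AffineSubspace ℝ (EuclideanSpace ℝ (Fin m))) := by
      rintro _ ⟨v, ⟨hvM, hvs⟩, rfl⟩
      exact h v hvM hvs
    have hle := affineSpan_le.mpr hsub
    rw [hspan] at hle
    have hx : (x - y) ∈ LinearMap.ker (innerSL ℝ (x - y) : EuclideanSpace ℝ (Fin m) →ₗ[ℝ] ℝ) := by
      have := hle (AffineSubspace.mem_top ℝ _ (x - y))
      simpa only [Submodule.mem_toAffineSubspace] using this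
    have : ⟪x - y, x - y⟫ = 0 := by
      simpa only [LinearMap.mem_ker, ContinuousLinearMap.coe_coe, innerSL_apply_apply] using hx
    exact hxy (sub_eq_zero.mp (inner_self_eq_zero.mp this))
  set g : (Fin n → ℝ) → ℝ :=
    fun v => a * Real.exp ⟪x, L v⟫ + b * Real.exp ⟪y, L v⟫ - Real.exp ⟪a • x + b • y, L v⟫
    with hg
  have hgcont : Continuous g :=
    (((hcont x).const_smul a).add ((hcont y).const_smul b)).sub (hcont _)
  have hgnonneg : ∀ v, 0 ≤ g v := fun v =>
    sub_nonneg.mpr (key x y a b ha.le hb.le hab v)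
  have hgint : IntegrableOn g M μ :=
    (((hint x).const_mul a).add ((hint y).const_mul b)).sub (hint _)
  have hgv0 : 0 < g v0 := by
    have hne : ⟪x, L v0⟫ ≠ ⟪y, L v0⟫ := by
      intro hEq
      exact hv0ne (by rw [inner_sub_left, hEq, sub_self])
    have := strictConvexOn_exp.2 (Set.mem_univ ⟪x, L v0⟫) (Set.mem_univ ⟪y, L v0⟫) hne ha hb hab
    have h2 : Real.exp ⟪a • x + b • y, L v0⟫
        < a * Real.exp ⟪x, L v0⟫ + b * Real.exp ⟪y, L v0⟫ := by
      simpa only [inner_add_left, real_inner_smul_left, smul_eq_mul] using this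
    simpa only [hg] using sub_pos.mpr h2
  have hpos : 0 < ∫ v in M, g v ∂μ := by
    rcases lt_or_eq_of_le (integral_nonneg_of_ae (Filter.Eventually.of_forall hgnonneg)
      (μ := μ.restrict M)) with hlt | heq
    · exact hlt
    · exfalso
      have hae : g =ᵐ[μ.restrict M] 0 :=
        (integral_eq_zero_iff_of_nonneg (fun v => hgnonneg v) hgint).mp heq.symm
      have hS : μ.restrict M {v | g v ≠ 0} = 0 := by
        have : {v | g v ≠ 0} ⊆ {v | ¬ g v = (0 : (Fin n → ℝ) → ℝ) v} := fun v hv => hv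
        exact measure_mono_null this hae
      have hmeas : MeasurableSet {v | g v ≠ 0} :=
        (isOpen_ne_fun hgcont continuous_const).measurableSet
      rw [Measure.restrict_apply hmeas] at hS
      have hμS : μ {v | g v ≠ 0} = 0 := by
        have hle : μ {v | g v ≠ 0} ≤ μ ({v | g v ≠ 0} ∩ M) + μ Mᶜ := by
          refine le_trans (measure_mono ?_) (measure_union_le _ _)
          intro v hv
          by_cases hvM : v ∈ M
          · exact Or.inl ⟨hv, hvM⟩
          · exact Or.inr hvM
        simpa [hS, hμsupp] using hle
      have hopen : IsOpen {v | g v ≠ 0} := isOpen_ne_fun hgcont continuous_const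
      have := hv0s _ hopen (ne_of_gt hgv0)
      exact absurd hμS (ne_of_gt this)
  have hlt : ∫ v in M, Real.exp ⟪a • x + b • y, L v⟫ ∂μ
      < ∫ v in M, (a * Real.exp ⟪x, L v⟫ + b * Real.exp ⟪y, L v⟫) ∂μ := by
    have := integral_sub (((hint x).const_mul a).add ((hint y).const_mul b)) (hint (a • x + b • y))
    have h3 : (∫ v in M, (a * Real.exp ⟪x, L v⟫ + b * Real.exp ⟪y, L v⟫) ∂μ)
        - ∫ v in M, Real.exp ⟪a • x + b • y, L v⟫ ∂μ = ∫ v in M, g v ∂μ := by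
      simp only [Pi.add_apply] at this
      rw [← this]
    linarith [hpos, h3]
  rw [hf, hf, hf]
  calc ∫ v in M, Real.exp ⟪a • x + b • y, L v⟫ ∂μ
      < ∫ v in M, (a * Real.exp ⟪x, L v⟫ + b * Real.exp ⟪y, L v⟫) ∂μ := hlt
    _ = a • (∫ v in M, Real.exp ⟪x, L v⟫ ∂μ) + b • (∫ v in M, Real.exp ⟪y, L v⟫ ∂μ) := by
        rw [integral_add ((hint x).const_mul a) ((hint y).const_mul b),
          integral_const_mul, integral_const_mul]; simp only [smul_eq_mul]
end

section
/- Let M ⊆ ℝ^n be compact, the closure of an open set, μ absolutely continuous w.r.t. Lebesgue measure with positive density on M, 𝓛 : ℝ^n → V continuous with 𝓛(M) contained in an affine hyperplane not through the origin, and suppose the affine hull of 𝓛(M) is that hyperplane. Then the image of the gradient map ∇f of f(x) = ∫_M e^{⟨x,𝓛(v)⟩} dμ(v) equals the interior of the conical hull of 𝓛(M). -/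
open MeasureTheory
open scoped RealInnerProductSpace ENNReal

/-- The conical hull of a set: all finite nonnegative combinations of its elements. -/
def conicalHull {V : Type*} [AddCommMonoid V] [Module ℝ V] (s : Set V) : Set V :=
  {y | ∃ (k : ℕ) (c : Fin k → ℝ) (z : Fin k → V),
    (∀ i, 0 ≤ c i) ∧ (∀ i, z i ∈ s) ∧ y = ∑ i, c i • z i}

section Aux

variable {V : Type*} [AddCommMonoid V] [Module ℝ V] {s : Set V}

theorem subset_conicalHull_aux : s ⊆ conicalHull s := by
  intro x hx
  exact ⟨1, fun _ => 1, fun _ => x, fun _ => zero_le_one, fun _ => hx, by simp⟩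

theorem zero_mem_conicalHull_aux : (0 : V) ∈ conicalHull s :=
  ⟨0, fun i => 0, fun i => i.elim0, fun i => le_rfl, fun i => i.elim0, by simp⟩

theorem smul_mem_conicalHull_aux {t : ℝ} (ht : 0 ≤ t) {y : V} (hy : y ∈ conicalHull s) :
    t • y ∈ conicalHull s := by
  obtain ⟨k, c, z, hc, hz, rfl⟩ := hy
  refine ⟨k, fun i => t * c i, z, fun i => mul_nonneg ht (hc i), hz, ?_⟩
  rw [Finset.smul_sum]
  exact Finset.sum_congr rfl fun i _ => (mul_smul t (c i) (z i)).symm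

theorem add_mem_conicalHull_aux {y₁ y₂ : V} (h₁ : y₁ ∈ conicalHull s)
    (h₂ : y₂ ∈ conicalHull s) : y₁ + y₂ ∈ conicalHull s := by
  obtain ⟨k₁, c₁, z₁, hc₁, hz₁, rfl⟩ := h₁
  obtain ⟨k₂, c₂, z₂, hc₂, hz₂, rfl⟩ := h₂
  refine ⟨k₁ + k₂, Fin.append c₁ c₂, Fin.append z₁ z₂, ?_, ?_, ?_⟩
  · intro i
    rcases Nat.lt_or_ge (i : ℕ) k₁ with hi | hi
    · have : i = Fin.castAdd k₂ ⟨i, hi⟩ := by ext; simp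
      rw [this, Fin.append_left]; exact hc₁ _
    · have : i = Fin.natAdd k₁ ⟨(i : ℕ) - k₁, by omega⟩ := by ext; simp; omega
      rw [this, Fin.append_right]; exact hc₂ _
  · intro i
    rcases Nat.lt_or_ge (i : ℕ) k₁ with hi | hi
    · have : i = Fin.castAdd k₂ ⟨i, hi⟩ := by ext; simp
      rw [this, Fin.append_left]; exact hz₁ _
    · have : i = Fin.natAdd k₁ ⟨(i : ℕ) - k₁, by omega⟩ := by ext; simp; omega
      rw [this, Fin.append_right]; exact hz₂ _
  · rw [Fin.sum_univ_add]
    congr 1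
    · exact Finset.sum_congr rfl fun i _ => by rw [Fin.append_left, Fin.append_left]
    · exact Finset.sum_congr rfl fun i _ => by rw [Fin.append_right, Fin.append_right]

theorem convex_conicalHull_aux : Convex ℝ (conicalHull s) := by
  intro x hx y hy a b ha hb _
  exact add_mem_conicalHull_aux (smul_mem_conicalHull_aux ha hx)
    (smul_mem_conicalHull_aux hb hy)

end Aux

set_option maxHeartbeats 2000000 in
set_option synthInstance.maxHeartbeats 1000000 in
/-- Theorem 2.3: with `M` the closure of a nonempty bounded open set, `μ` absolutely
continuous w.r.t. Lebesgue with positive density on `M`, and `𝓛(M)` lying in (and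
affinely spanning) the hyperplane `{x : ⟨x,h⟩ = 1}`, the image of the gradient map of
`f(x) = ∫_M e^{⟨x,𝓛(v)⟩} dμ(v)` is the interior of the conical hull of `𝓛(M)`. -/
theorem stmt8 {n m : ℕ} (U M : Set (Fin n → ℝ))
    (hU : IsOpen U) (hUne : U.Nonempty) (hUb : Bornology.IsBounded U)
    (hM : M = closure U)
    (ρ : (Fin n → ℝ) → ℝ≥0∞) (hρmeas : Measurable ρ)
    (hρpos : ∀ x ∈ M, 0 < ρ x)
    (μ : Measure (Fin n → ℝ)) (hμ : μ = (volume.restrict M).withDensity ρ)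
    [IsFiniteMeasure μ]
    (L : (Fin n → ℝ) → EuclideanSpace ℝ (Fin m)) (hL : Continuous L)
    (h : EuclideanSpace ℝ (Fin m)) (hhyp : ∀ v ∈ M, ⟪h, L v⟫ = 1)
    (haff : (affineSpan ℝ (L '' M) : Set (EuclideanSpace ℝ (Fin m)))
      = {x | ⟪h, x⟫ = 1})
    (f : EuclideanSpace ℝ (Fin m) → ℝ)
    (hf : ∀ x, f x = ∫ v in M, Real.exp ⟪x, L v⟫ ∂μ) :
    Set.range (gradient f) = interior (conicalHull (L '' M)) := by
  classical
  -- basic facts about M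
  have hUM : U ⊆ M := hM ▸ subset_closure
  have hMne : M.Nonempty := hUne.mono hUM
  have hMclosed : IsClosed M := hM ▸ isClosed_closure
  have hMcomp : IsCompact M := by
    rw [hM]; exact Metric.isCompact_of_isClosed_isBounded isClosed_closure hUb.closure
  -- h is nonzero
  have hne0 : h ≠ 0 := by
    obtain ⟨v, hv⟩ := hMne
    intro h0
    have := hhyp v hv
    rw [h0, inner_zero_left] at this
    exact zero_ne_one this
  -- the span lemma: any submodule containing the hyperplane is everything
  have hspan : ∀ (p : Submodule ℝ (EuclideanSpace ℝ (Fin m))), (∀ x : EuclideanSpace ℝ (Fin m), ⟪h, x⟫ = 1 → x ∈ p) → ∀ x : EuclideanSpace ℝ (Fin m), x ∈ p := by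
    intro p hp x
    have hh : ⟪h, h⟫ ≠ 0 := inner_self_ne_zero.mpr hne0
    set x₀ : EuclideanSpace ℝ (Fin m) := (⟪h, h⟫)⁻¹ • h with hx₀
    have hx₀p : x₀ ∈ p := by
      apply hp
      rw [hx₀, real_inner_smul_right, inv_mul_cancel₀ hh]
    have hx₀1 : ⟪h, x₀⟫ = 1 := by
      rw [hx₀, real_inner_smul_right, inv_mul_cancel₀ hh]
    have hu : ∀ u : EuclideanSpace ℝ (Fin m), ⟪h, u⟫ = 0 → u ∈ p := by
      intro u hu0
      have : x₀ + u ∈ p := by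
        apply hp
        rw [inner_add_right, hx₀1, hu0, add_zero]
      simpa using p.sub_mem this hx₀p
    have h1 : x - ⟪h, x⟫ • x₀ ∈ p := by
      apply hu
      rw [inner_sub_right, real_inner_smul_right, hx₀1, mul_one, sub_self]
    have := p.add_mem h1 (p.smul_mem ⟪h, x⟫ hx₀p)
    simpa using this
  -- the cone
  set C : Set (EuclideanSpace ℝ (Fin m)) := conicalHull (L '' M) with hC
  have hCconv : Convex ℝ C := convex_conicalHull_aux
  have hC0 : (0 : EuclideanSpace ℝ (Fin m)) ∈ C := zero_mem_conicalHull_aux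
  have hLC : ∀ v ∈ M, L v ∈ C := fun v hv => subset_conicalHull_aux ⟨v, hv, rfl⟩
  -- nonneg functionals on L '' M are nonpos on C
  have hConeNonpos : ∀ (φ : EuclideanSpace ℝ (Fin m) →L[ℝ] ℝ), (∀ v ∈ M, φ (L v) ≤ 0) → ∀ z ∈ C, φ z ≤ 0 := by
    intro φ hφ z hz
    obtain ⟨k, c, zf, hc, hzf, rfl⟩ := hz
    rw [map_sum]
    apply Finset.sum_nonpos
    intro i _
    rw [_root_.map_smul, smul_eq_mul]
    obtain ⟨v, hv, hvz⟩ := hzf i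
    exact mul_nonpos_of_nonneg_of_nonpos (hc i) (hvz ▸ hφ v hv)
  -- interior of C is nonempty
  have hCint : (interior C).Nonempty := by
    rw [hCconv.interior_nonempty_iff_affineSpan_eq_top]
    have hsub : ∀ x : EuclideanSpace ℝ (Fin m), ⟪h, x⟫ = 1 → x ∈ Submodule.span ℝ (L '' M) := by
      intro x hx
      have hx' : x ∈ (affineSpan ℝ (L '' M) : Set (EuclideanSpace ℝ (Fin m))) := by
        rw [haff]; exact hx
      have hle : affineSpan ℝ (L '' M) ≤ (Submodule.span ℝ (L '' M)).toAffineSubspace := by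
        apply affineSpan_le.mpr
        exact fun z hz => Submodule.subset_span hz
      exact hle hx'
    have hspanLM : ∀ x : EuclideanSpace ℝ (Fin m), x ∈ Submodule.span ℝ (L '' M) :=
      hspan _ hsub
    rw [eq_top_iff]
    rintro x -
    have hdir : ∀ w : EuclideanSpace ℝ (Fin m),
        w ∈ (affineSpan ℝ C).direction → w ∈ affineSpan ℝ C := by
      intro w hw
      have h0C : (0 : EuclideanSpace ℝ (Fin m)) ∈ affineSpan ℝ C := subset_affineSpan _ _ hC0
      simpa using AffineSubspace.vadd_mem_of_mem_direction hw h0C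
    apply hdir
    have hLsub : Submodule.span ℝ (L '' M) ≤ (affineSpan ℝ C).direction := by
      apply Submodule.span_le.mpr
      intro z hz
      have hzC : z ∈ C := subset_conicalHull_aux hz
      have : z - 0 ∈ (affineSpan ℝ C).direction :=
        AffineSubspace.vsub_mem_direction (subset_affineSpan _ _ hzC)
          (subset_affineSpan _ _ hC0)
      simpa using this
    exact hLsub (hspanLM x)
  -- positivity of μ on nonempty open subsets of M
  have posA : ∀ A : Set (Fin n → ℝ), IsOpen A → A.Nonempty → A ⊆ M → 0 < μ A := by
    intro A hAopen hAne hAM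
    rw [hμ, withDensity_apply _ hAopen.measurableSet, Measure.restrict_restrict hAopen.measurableSet,
      Set.inter_eq_self_of_subset_left hAM]
    rw [pos_iff_ne_zero]
    intro h0
    have hae : ρ =ᵐ[volume.restrict A] 0 := (lintegral_eq_zero_iff hρmeas).mp h0
    have : volume.restrict A {v | ρ v ≠ 0} = 0 := hae
    have hms : MeasurableSet {v | ρ v ≠ 0} := (hρmeas (measurableSet_singleton 0)).compl
    rw [Measure.restrict_apply hms] at this
    have hAsub : A ⊆ {v | ρ v ≠ 0} := fun v hv => (hρpos v (hAM hv)).ne'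
    rw [Set.inter_eq_self_of_subset_right hAsub] at this
    exact (hAopen.measure_pos volume hAne).ne' this
  -- a continuous nonnegative function with zero integral vanishes on M
  have vanish : ∀ g : (Fin n → ℝ) → ℝ, Continuous g → (∀ v ∈ M, 0 ≤ g v) →
      (∫ v in M, g v ∂μ) = 0 → ∀ v ∈ M, g v = 0 := by
    intro g hgcont hgnn hgint
    have hgInt : IntegrableOn g M μ :=
      hgcont.continuousOn.integrableOn_compact hMcomp
    have hae : g =ᵐ[μ.restrict M] 0 := by
      have hnn : 0 ≤ᵐ[μ.restrict M] g :=
        ae_restrict_of_forall_mem hMclosed.measurableSet hgnn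
      exact (integral_eq_zero_iff_of_nonneg_ae hnn hgInt).mp hgint
    have hnull : μ ({v | g v ≠ 0} ∩ M) = 0 := by
      have : μ.restrict M {v | g v ≠ 0} = 0 := hae
      have hms : MeasurableSet {v | g v ≠ 0} :=
        ((measurableSet_singleton (0:ℝ)).preimage hgcont.measurable).compl
      rwa [Measure.restrict_apply hms] at this
    have hU0 : ∀ u ∈ U, g u = 0 := by
      intro u hu
      by_contra hgu
      have hgupos : 0 < g u := lt_of_le_of_ne (hgnn u (hUM hu)) (Ne.symm hgu)
      set A := U ∩ {v | 0 < g v} with hA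
      have hAopen : IsOpen A := hU.inter (isOpen_lt continuous_const hgcont)
      have hAne : A.Nonempty := ⟨u, hu, hgupos⟩
      have hAM : A ⊆ M := fun v hv => hUM hv.1
      have hpos := posA A hAopen hAne hAM
      have hsub : A ⊆ {v | g v ≠ 0} ∩ M := fun v hv => ⟨(hv.2).ne', hAM hv⟩
      exact absurd (measure_mono_null hsub hnull) hpos.ne'
    intro v hv
    have hclosed : IsClosed {v | g v = 0} := isClosed_eq hgcont continuous_const
    have : M ⊆ {v | g v = 0} := by
      rw [hM]
      exact closure_minimal hU0 hclosed
    exact this hv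
  -- integrability
  have int_exp : ∀ x : EuclideanSpace ℝ (Fin m), IntegrableOn (fun v => Real.exp ⟪x, L v⟫) M μ := by
    intro x
    exact (Real.continuous_exp.comp (continuous_const.inner hL)).continuousOn.integrableOn_compact
      hMcomp
  have int_expL : ∀ x : EuclideanSpace ℝ (Fin m), IntegrableOn (fun v => Real.exp ⟪x, L v⟫ • L v) M μ := by
    intro x
    exact ((Real.continuous_exp.comp (continuous_const.inner hL)).smul hL).continuousOn.integrableOn_compact
      hMcomp
  -- the candidate gradient
  set g' : EuclideanSpace ℝ (Fin m) → EuclideanSpace ℝ (Fin m) := fun x => ∫ v in M, Real.exp ⟪x, L v⟫ • L v ∂μ with hg'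
  obtain ⟨K₀, hK₀⟩ := hMcomp.exists_bound_of_continuousOn hL.continuousOn
  set K : ℝ := max K₀ 0 with hKdef
  have hK : ∀ v ∈ M, ‖L v‖ ≤ K := fun v hv => le_trans (hK₀ v hv) (le_max_left _ _)
  have hKnn : 0 ≤ K := le_max_right _ _
  set F' : EuclideanSpace ℝ (Fin m) → (Fin n → ℝ) → (EuclideanSpace ℝ (Fin m) →L[ℝ] ℝ) :=
    fun x v => Real.exp ⟪x, L v⟫ • (innerSL ℝ (L v)) with hF'def
  have hF'cont : ∀ x, Continuous (F' x) := by
    intro x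
    exact (Real.continuous_exp.comp (continuous_const.inner hL)).smul
      ((innerSL ℝ).continuous.comp hL)
  have int_F' : ∀ x : EuclideanSpace ℝ (Fin m), IntegrableOn (F' x) M μ := fun x =>
    (hF'cont x).continuousOn.integrableOn_compact hMcomp
  have hinner_fd : ∀ (v : Fin n → ℝ) (x : EuclideanSpace ℝ (Fin m)),
      HasFDerivAt (fun x : EuclideanSpace ℝ (Fin m) => ⟪x, L v⟫) (innerSL ℝ (L v)) x := by
    intro v x
    have heq : (fun x : EuclideanSpace ℝ (Fin m) => ⟪x, L v⟫)
        = fun x => (innerSL ℝ (L v)) x := by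
      funext x; exact real_inner_comm _ _
    rw [heq]
    exact (innerSL ℝ (L v)).hasFDerivAt
  have hgrad : ∀ x : EuclideanSpace ℝ (Fin m), HasGradientAt f (g' x) x := by
    intro x₀
    have key : HasFDerivAt (fun x => ∫ v in M, Real.exp ⟪x, L v⟫ ∂μ)
        (∫ v in M, F' x₀ v ∂μ) x₀ := by
      apply hasFDerivAt_integral_of_dominated_of_fderiv_le (Metric.ball_mem_nhds x₀ one_pos)
        (bound := fun _ => Real.exp ((‖x₀‖ + 1) * K) * K)
      · exact Filter.Eventually.of_forall fun x =>
          (Real.continuous_exp.comp (continuous_const.inner hL)).aestronglyMeasurable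
      · exact int_exp x₀
      · exact (hF'cont x₀).aestronglyMeasurable
      · apply ae_restrict_of_forall_mem hMclosed.measurableSet
        intro v hv x hx
        have hxb : ‖x‖ ≤ ‖x₀‖ + 1 := by
          have h1 : ‖x - x₀‖ < 1 := mem_ball_iff_norm.mp hx
          have h2 : ‖x‖ - ‖x₀‖ ≤ ‖x - x₀‖ := norm_sub_norm_le _ _
          linarith
        have hip : ⟪x, L v⟫ ≤ (‖x₀‖ + 1) * K := by
          calc ⟪x, L v⟫ ≤ ‖x‖ * ‖L v‖ := real_inner_le_norm _ _
          _ ≤ (‖x₀‖ + 1) * K :=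
            mul_le_mul hxb (hK v hv) (norm_nonneg _) (by positivity)
        calc ‖F' x v‖ = Real.exp ⟪x, L v⟫ * ‖innerSL ℝ (L v)‖ := by
              show ‖Real.exp ⟪x, L v⟫ • (innerSL ℝ) (L v)‖ = _
              rw [norm_smul (Real.exp ⟪x, L v⟫) ((innerSL ℝ) (L v)), Real.norm_eq_abs,
                Real.abs_exp]
        _ = Real.exp ⟪x, L v⟫ * ‖L v‖ := by rw [innerSL_apply_norm]
        _ ≤ Real.exp ((‖x₀‖ + 1) * K) * K :=
            mul_le_mul (Real.exp_le_exp.mpr hip) (hK v hv) (norm_nonneg _)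
              (Real.exp_pos _).le
      · exact integrable_const _
      · apply ae_restrict_of_forall_mem hMclosed.measurableSet
        intro v _ x _
        exact (hinner_fd v x).exp
    have hTD : (InnerProductSpace.toDual ℝ (EuclideanSpace ℝ (Fin m))) (g' x₀)
        = ∫ v in M, F' x₀ v ∂μ := by
      apply ContinuousLinearMap.ext
      intro w
      rw [InnerProductSpace.toDual_apply_apply, ContinuousLinearMap.integral_apply (int_F' x₀)]
      calc ⟪g' x₀, w⟫ = ⟪w, g' x₀⟫ := real_inner_comm _ _
      _ = ∫ v in M, ⟪w, Real.exp ⟪x₀, L v⟫ • L v⟫ ∂μ := (integral_inner (int_expL x₀) w).symm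
      _ = ∫ v in M, (F' x₀ v) w ∂μ := by
          apply integral_congr_ae
          apply Filter.Eventually.of_forall
          intro v
          rw [hF'def]
          simp only [real_inner_smul_right, ContinuousLinearMap.coe_smul', Pi.smul_apply,
            innerSL_apply_apply, smul_eq_mul]
          rw [real_inner_comm w (L v)]
    rw [HasGradientAt, HasGradientAtFilter, hTD]
    have hfeq : f = fun x => ∫ v in M, Real.exp ⟪x, L v⟫ ∂μ := funext hf
    rw [hfeq]
    exact key
  have hgradf : ∀ x : EuclideanSpace ℝ (Fin m), gradient f x = g' x := fun x => (hgrad x).gradient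
  -- convexity of f
  have hfconv : ConvexOn ℝ Set.univ f := by
    refine ⟨convex_univ, ?_⟩
    intro x₁ _ x₂ _ a b ha hb hab
    rw [hf, hf, hf]
    have hpt : ∀ v ∈ M, Real.exp ⟪a • x₁ + b • x₂, L v⟫
        ≤ a * Real.exp ⟪x₁, L v⟫ + b * Real.exp ⟪x₂, L v⟫ := by
      intro v _
      have : ⟪a • x₁ + b • x₂, L v⟫ = a * ⟪x₁, L v⟫ + b * ⟪x₂, L v⟫ := by
        rw [inner_add_left, real_inner_smul_left, real_inner_smul_left]
      rw [this]
      have := convexOn_exp.2 (Set.mem_univ ⟪x₁, L v⟫) (Set.mem_univ ⟪x₂, L v⟫) ha hb hab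
      simpa using this
    have hIr : IntegrableOn (fun v => a * Real.exp ⟪x₁, L v⟫ + b * Real.exp ⟪x₂, L v⟫) M μ :=
      ((int_exp x₁).const_mul a).add ((int_exp x₂).const_mul b)
    calc ∫ v in M, Real.exp ⟪a • x₁ + b • x₂, L v⟫ ∂μ
        ≤ ∫ v in M, (a * Real.exp ⟪x₁, L v⟫ + b * Real.exp ⟪x₂, L v⟫) ∂μ := by
          apply setIntegral_mono_on (int_exp _) hIr hMclosed.measurableSet hpt
    _ = a * ∫ v in M, Real.exp ⟪x₁, L v⟫ ∂μ + b * ∫ v in M, Real.exp ⟪x₂, L v⟫ ∂μ := by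
          rw [integral_add ((int_exp x₁).const_mul a) ((int_exp x₂).const_mul b),
            integral_const_mul, integral_const_mul]
    _ = a • (∫ v in M, Real.exp ⟪x₁, L v⟫ ∂μ) + b • (∫ v in M, Real.exp ⟪x₂, L v⟫ ∂μ) := rfl
  have hfnonneg : ∀ x : EuclideanSpace ℝ (Fin m), 0 ≤ f x := by
    intro x
    rw [hf]
    exact setIntegral_nonneg hMclosed.measurableSet fun v _ => (Real.exp_pos _).le
  -- forward inclusion
  -- limits of linear functionals along segments into the interior
  have hsegle : ∀ (φ : EuclideanSpace ℝ (Fin m) →L[ℝ] ℝ) (r : ℝ) (w : EuclideanSpace ℝ (Fin m)),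
      w ∈ interior C → (∀ a ∈ interior C, φ a < r) → ∀ z ∈ C, φ z ≤ r := by
    intro φ r w hw hlt z hz
    have hmem : ∀ t : ℝ, t ∈ Set.Ioc (0:ℝ) 1 → φ (t • w + (1 - t) • z) < r := by
      intro t ht
      apply hlt
      exact hCconv.combo_interior_closure_mem_interior hw (subset_closure hz) ht.1
        (by linarith [ht.2]) (by ring)
    have hψcont : Continuous fun t : ℝ => φ (t • w + (1 - t) • z) :=
      φ.continuous.comp ((continuous_id.smul continuous_const).add
        ((continuous_const.sub continuous_id).smul continuous_const))
    have htend : Filter.Tendsto (fun t : ℝ => φ (t • w + (1 - t) • z))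
        (nhdsWithin 0 (Set.Ioi 0)) (nhds (φ z)) := by
      have := (hψcont.tendsto 0).mono_left (nhdsWithin_le_nhds (s := Set.Ioi (0:ℝ)))
      simpa using this
    apply le_of_tendsto htend
    filter_upwards [Ioc_mem_nhdsGT_of_mem (Set.mem_Ico.mpr ⟨le_refl _, zero_lt_one⟩)] with t ht
    exact (hmem t ht).le
  have fwd : ∀ x : EuclideanSpace ℝ (Fin m), g' x ∈ interior C := by
    intro x
    by_contra hy
    obtain ⟨φ, hφ⟩ := geometric_hahn_banach_open_point hCconv.interior isOpen_interior hy
    obtain ⟨w, hw⟩ := hCint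
    -- φ is at most φ (g' x) on all of C
    have hφC : ∀ z ∈ C, φ z ≤ φ (g' x) := hsegle φ _ w hw hφ
    -- hence φ is nonpositive on C
    have hφ0 : 0 ≤ φ (g' x) := by
      have := hφC 0 hC0
      simpa using this
    have hφcone : ∀ z ∈ C, φ z ≤ 0 := by
      intro z hz
      by_contra hpos
      push_neg at hpos
      have ht : (0:ℝ) ≤ (φ (g' x) + 1) / φ z := by positivity
      have := hφC _ (smul_mem_conicalHull_aux ht hz)
      rw [_root_.map_smul, smul_eq_mul, div_mul_cancel₀ _ hpos.ne'] at this
      linarith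
    have hφLM : ∀ v ∈ M, φ (L v) ≤ 0 := fun v hv => hφcone _ (hLC v hv)
    -- φ (g' x) as an integral
    have hint : φ (g' x) = ∫ v in M, Real.exp ⟪x, L v⟫ * φ (L v) ∂μ := by
      rw [hg']
      rw [← φ.integral_comp_comm (int_expL x)]
      congr 1
      funext v
      rw [_root_.map_smul, smul_eq_mul]
    have hle0 : φ (g' x) ≤ 0 := by
      rw [hint]
      apply integral_nonpos_of_ae
      apply ae_restrict_of_forall_mem hMclosed.measurableSet
      intro v hv
      exact mul_nonpos_of_nonneg_of_nonpos (Real.exp_pos _).le (hφLM v hv)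
    have heq0 : φ (g' x) = 0 := le_antisymm hle0 hφ0
    -- the integrand vanishes identically on M
    have hvan : ∀ v ∈ M, Real.exp ⟪x, L v⟫ * (-(φ (L v))) = 0 := by
      apply vanish
      · exact (Real.continuous_exp.comp (continuous_const.inner hL)).mul
          ((φ.continuous.comp hL).neg)
      · intro v hv
        exact mul_nonneg (Real.exp_pos _).le (neg_nonneg.mpr (hφLM v hv))
      · have : (∫ v in M, Real.exp ⟪x, L v⟫ * (-(φ (L v))) ∂μ)
            = -∫ v in M, Real.exp ⟪x, L v⟫ * φ (L v) ∂μ := by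
          rw [← integral_neg]
          congr 1
          funext v
          ring
        rw [this, ← hint, heq0, neg_zero]
    have hker : ∀ v ∈ M, φ (L v) = 0 := by
      intro v hv
      have := hvan v hv
      have hexp : Real.exp ⟪x, L v⟫ ≠ 0 := (Real.exp_pos _).ne'
      have := mul_eq_zero.mp this
      rcases this with h1 | h1
      · exact absurd h1 hexp
      · linarith [neg_eq_zero.mp h1]
    -- so φ vanishes on the hyperplane, hence φ = 0
    have hφzero : ∀ z : EuclideanSpace ℝ (Fin m), φ z = 0 := by
      have hLMk : L '' M ⊆ {z | φ z = 0} := by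
        rintro _ ⟨v, hv, rfl⟩
        exact hker v hv
      have hkerAff : ∀ z : EuclideanSpace ℝ (Fin m), ⟪h, z⟫ = 1 →
          z ∈ LinearMap.ker (φ : EuclideanSpace ℝ (Fin m) →ₗ[ℝ] ℝ) := by
        intro z hz
        have hz' : z ∈ (affineSpan ℝ (L '' M) : Set (EuclideanSpace ℝ (Fin m))) := by
          rw [haff]; exact hz
        have hle : affineSpan ℝ (L '' M)
            ≤ (LinearMap.ker (φ : EuclideanSpace ℝ (Fin m) →ₗ[ℝ] ℝ)).toAffineSubspace := by
          apply affineSpan_le.mpr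
          intro z hz
          exact LinearMap.mem_ker.mpr (hLMk hz)
        exact hle hz'
      intro z
      exact LinearMap.mem_ker.mp (hspan _ hkerAff z)
    have : φ w < 0 := heq0 ▸ hφ w hw
    rw [hφzero w] at this
    exact lt_irrefl _ this
  -- backward inclusion
  have bwd : ∀ y ∈ interior C, ∃ x : EuclideanSpace ℝ (Fin m), g' x = y := by
    intro y hy
    set g : EuclideanSpace ℝ (Fin m) → ℝ := fun x => f x - ⟪y, x⟫ with hgdef
    have hfcont : Continuous f := by
      rw [continuous_iff_continuousAt]
      exact fun x => (hgrad x).continuousAt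
    have hgcont : Continuous g := hfcont.sub (continuous_const.inner continuous_id)
    have hgradg : ∀ x : EuclideanSpace ℝ (Fin m), HasGradientAt g (g' x - y) x := by
      intro x
      apply hasGradientAt_iff_hasFDerivAt.mpr
      rw [map_sub]
      have h1 : HasFDerivAt f ((InnerProductSpace.toDual ℝ (EuclideanSpace ℝ (Fin m))) (g' x)) x :=
        hasGradientAt_iff_hasFDerivAt.mp (hgrad x)
      have h2 : HasFDerivAt (fun z : EuclideanSpace ℝ (Fin m) => ⟪y, z⟫)
          ((InnerProductSpace.toDual ℝ (EuclideanSpace ℝ (Fin m))) y) x := by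
        have heq : (fun z : EuclideanSpace ℝ (Fin m) => ⟪y, z⟫)
            = fun z => (InnerProductSpace.toDual ℝ (EuclideanSpace ℝ (Fin m)) y) z := by
          funext z; rw [InnerProductSpace.toDual_apply_apply]
        rw [heq]
        exact (InnerProductSpace.toDual ℝ (EuclideanSpace ℝ (Fin m)) y).hasFDerivAt
      exact h1.sub h2
    have hgconv : ConvexOn ℝ Set.univ g := by
      refine ⟨convex_univ, ?_⟩
      intro x₁ _ x₂ _ a b ha hb hab
      have h1 := hfconv.2 (Set.mem_univ x₁) (Set.mem_univ x₂) ha hb hab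
      have h2 : ⟪y, a • x₁ + b • x₂⟫ = a * ⟪y, x₁⟫ + b * ⟪y, x₂⟫ := by
        rw [inner_add_right, real_inner_smul_right, real_inner_smul_right]
      simp only [hgdef, smul_eq_mul] at h1 ⊢
      rw [h2]
      ring_nf
      ring_nf at h1
      linarith
    -- escape along every direction
    have claim1 : ∀ d ∈ Metric.sphere (0 : EuclideanSpace ℝ (Fin m)) 1,
        ∃ t : ℝ, 0 < t ∧ g 0 < g (t • d) := by
      intro d hdS
      have hd : ‖d‖ = 1 := by simpa using mem_sphere_zero_iff_norm.mp hdS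
      by_cases hcase : ∃ v ∈ M, 0 < ⟪d, L v⟫
      · obtain ⟨v₀, hv₀M, hv₀⟩ := hcase
        set ε : ℝ := ⟪d, L v₀⟫ / 2 with hεdef
        have hε : 0 < ε := half_pos hv₀
        set W : Set (Fin n → ℝ) := {v | ε < ⟪d, L v⟫} with hWdef
        have hWopen : IsOpen W := isOpen_lt continuous_const (continuous_const.inner hL)
        have hv₀W : v₀ ∈ W := by
          simp only [hWdef, Set.mem_setOf_eq, hεdef]
          linarith
        have hv₀cl : v₀ ∈ closure U := hM ▸ hv₀M
        obtain ⟨u, huW, huU⟩ := _root_.mem_closure_iff.mp hv₀cl W hWopen hv₀W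
        set A : Set (Fin n → ℝ) := U ∩ W with hAdef
        have hAopen : IsOpen A := hU.inter hWopen
        have hAne : A.Nonempty := ⟨u, huU, huW⟩
        have hAM : A ⊆ M := fun v hv => hUM hv.1
        have hμA : 0 < μ A := posA A hAopen hAne hAM
        have hμAfin : μ A < ⊤ := measure_lt_top μ A
        set c : ℝ := (μ A).toReal with hcdef
        have hc : 0 < c := ENNReal.toReal_pos hμA.ne' hμAfin.ne
        have hlb : ∀ t : ℝ, 0 ≤ t → Real.exp (t * ε) * c - t * ⟪y, d⟫ ≤ g (t • d) := by
          intro t ht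
          have hconst : IntegrableOn (fun _ : Fin n → ℝ => Real.exp (t * ε)) A μ := by
            apply (integrableOn_const_iff (C := Real.exp (t * ε))).mpr
            exact Or.inr hμAfin
          have key1 : ∫ _ in A, Real.exp (t * ε) ∂μ ≤ ∫ v in A, Real.exp ⟪t • d, L v⟫ ∂μ := by
            apply setIntegral_mono_on hconst ((int_exp _).mono_set hAM) hAopen.measurableSet
            intro v hv
            apply Real.exp_le_exp.mpr
            rw [real_inner_smul_left]
            exact mul_le_mul_of_nonneg_left (le_of_lt hv.2) ht
          have key2 : ∫ v in A, Real.exp ⟪t • d, L v⟫ ∂μ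
              ≤ ∫ v in M, Real.exp ⟪t • d, L v⟫ ∂μ := by
            apply setIntegral_mono_set (int_exp _)
            · exact Filter.Eventually.of_forall fun v => (Real.exp_pos _).le
            · exact HasSubset.Subset.eventuallyLE hAM
          have key0 : ∫ _ in A, Real.exp (t * ε) ∂μ = c * Real.exp (t * ε) := by
            rw [setIntegral_const, smul_eq_mul, measureReal_def]
          have hyd : ⟪y, t • d⟫ = t * ⟪y, d⟫ := real_inner_smul_right _ _ _
          have : g (t • d) = (∫ v in M, Real.exp ⟪t • d, L v⟫ ∂μ) - t * ⟪y, d⟫ := by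
            rw [hgdef]
            simp only
            rw [hf, hyd]
          rw [this]
          rw [key0] at key1
          linarith
        have h1 : Filter.Tendsto (fun t : ℝ => t * ε) Filter.atTop Filter.atTop :=
          Filter.Tendsto.atTop_mul_const hε Filter.tendsto_id
        have h2 : Filter.Tendsto (fun t : ℝ => Real.exp (t * ε) / (t * ε))
            Filter.atTop Filter.atTop := by
          have := (Real.tendsto_exp_div_pow_atTop 1).comp h1
          simpa [Function.comp_def] using this
        have h3 : Filter.Tendsto
            (fun t : ℝ => ε * (Real.exp (t * ε) / (t * ε)) * c - ⟪y, d⟫)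
            Filter.atTop Filter.atTop := by
          apply Filter.tendsto_atTop_add_const_right
          exact Filter.Tendsto.atTop_mul_const hc (Filter.Tendsto.const_mul_atTop hε h2)
        have h4 : Filter.Tendsto
            (fun t : ℝ => t * (ε * (Real.exp (t * ε) / (t * ε)) * c - ⟪y, d⟫))
            Filter.atTop Filter.atTop := Filter.Tendsto.atTop_mul_atTop₀ Filter.tendsto_id h3
        have h5 : Filter.Tendsto (fun t : ℝ => Real.exp (t * ε) * c - t * ⟪y, d⟫)
            Filter.atTop Filter.atTop := by
          apply h4.congr'
          filter_upwards [Filter.eventually_gt_atTop (0:ℝ)] with t htpos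
          have htε : t * ε ≠ 0 := by positivity
          field_simp
        obtain ⟨t, hgt, htpos⟩ :=
          ((h5.eventually_gt_atTop (g 0)).and (Filter.eventually_gt_atTop (0:ℝ))).exists
        exact ⟨t, htpos, lt_of_lt_of_le hgt (hlb t htpos.le)⟩
      · push_neg at hcase
        have hdC : ∀ z ∈ C, ⟪d, z⟫ ≤ 0 := by
          apply hConeNonpos (innerSL ℝ d)
          intro v hv
          simpa using hcase v hv
        obtain ⟨δ, hδ, hball⟩ := Metric.mem_nhds_iff.mp (mem_interior_iff_mem_nhds.mp hy)
        have hyd : ⟪d, y⟫ ≤ -(δ / 2) := by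
          have hmem : y + (δ / 2) • d ∈ C := by
            apply hball
            rw [Metric.mem_ball, dist_eq_norm]
            have : y + (δ / 2) • d - y = (δ / 2) • d := by abel
            rw [this, norm_smul, hd]
            simp only [Real.norm_eq_abs, mul_one]
            rw [abs_of_pos (by linarith)]
            linarith
          have h6 := hdC _ hmem
          rw [inner_add_right, real_inner_smul_right] at h6
          have h7 : ⟪d, d⟫ = 1 := by
            rw [real_inner_self_eq_norm_mul_norm, hd]; ring
          rw [h7, mul_one] at h6
          linarith
        refine ⟨2 * (|g 0| + 1) / δ, by positivity, ?_⟩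
        set t : ℝ := 2 * (|g 0| + 1) / δ with htdef
        have htpos : 0 < t := by positivity
        have hglb : t * (δ / 2) ≤ g (t • d) := by
          have hfn := hfnonneg (t • d)
          have h8 : ⟪y, t • d⟫ = t * ⟪d, y⟫ := by
            rw [real_inner_smul_right, real_inner_comm]
          have : g (t • d) = f (t • d) - t * ⟪d, y⟫ := by
            rw [hgdef]; simp only; rw [h8]
          rw [this]
          nlinarith
        have h9 : t * (δ / 2) = |g 0| + 1 := by
          rw [htdef]; field_simp
        have h10 : g 0 ≤ |g 0| := le_abs_self _
        calc g 0 ≤ |g 0| := h10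
        _ < |g 0| + 1 := by linarith
        _ = t * (δ / 2) := h9.symm
        _ ≤ g (t • d) := hglb
    -- uniform escape radius via compactness of the sphere
    haveI : Nontrivial (EuclideanSpace ℝ (Fin m)) := nontrivial_of_ne h 0 hne0
    choose! t htpos hgt using claim1
    set V : EuclideanSpace ℝ (Fin m) → Set (EuclideanSpace ℝ (Fin m)) :=
      fun d => {e | g 0 < g (t d • e)} with hVdef
    have hVopen : ∀ d, IsOpen (V d) := by
      intro d
      exact isOpen_lt continuous_const (hgcont.comp (continuous_const_smul (t d)))
    have hcover : Metric.sphere (0 : EuclideanSpace ℝ (Fin m)) 1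
        ⊆ ⋃ d ∈ Metric.sphere (0 : EuclideanSpace ℝ (Fin m)) 1, V d := by
      intro d hd
      exact Set.mem_biUnion hd (hgt d hd)
    obtain ⟨b, hbS, hbfin, hbcover⟩ :=
      (isCompact_sphere (0 : EuclideanSpace ℝ (Fin m)) 1).elim_finite_subcover_image
        (fun d _ => hVopen d) hcover
    set T : ℝ := 1 + ∑ d ∈ hbfin.toFinset, t d with hTdef
    have hsum_nonneg : ∀ d ∈ hbfin.toFinset, 0 ≤ t d := fun d hd =>
      (htpos d (hbS (hbfin.mem_toFinset.mp hd))).le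
    have hTpos : 0 < T := by
      have := Finset.sum_nonneg hsum_nonneg
      rw [hTdef]; linarith
    have hTd : ∀ d ∈ b, t d ≤ T := by
      intro d hd
      have h11 : t d ≤ ∑ e ∈ hbfin.toFinset, t e :=
        Finset.single_le_sum hsum_nonneg (hbfin.mem_toFinset.mpr hd)
      rw [hTdef]; linarith
    have main : ∀ x : EuclideanSpace ℝ (Fin m), ‖x‖ = T → g 0 < g x := by
      intro x hx
      have hdS : T⁻¹ • x ∈ Metric.sphere (0 : EuclideanSpace ℝ (Fin m)) 1 := by
        rw [mem_sphere_zero_iff_norm, norm_smul, hx, Real.norm_eq_abs, abs_inv,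
          abs_of_pos hTpos, inv_mul_cancel₀ hTpos.ne']
      obtain ⟨d₀, hd₀b, hd₀⟩ := Set.mem_iUnion₂.mp (hbcover hdS)
      have ha1 : t d₀ • (T⁻¹ • x) = (t d₀ / T) • x := by
        rw [smul_smul, div_eq_mul_inv]
      set a : ℝ := t d₀ / T with hadef
      have hd₀S : d₀ ∈ Metric.sphere (0 : EuclideanSpace ℝ (Fin m)) 1 := hbS hd₀b
      have ha_pos : 0 < a := div_pos (htpos d₀ hd₀S) hTpos
      have ha_le : a ≤ 1 := (div_le_one hTpos).mpr (hTd d₀ hd₀b)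
      have h5 : g 0 < g (a • x) := by
        have : g 0 < g (t d₀ • (T⁻¹ • x)) := hd₀
        rwa [ha1] at this
      have hcombo := hgconv.2 (Set.mem_univ x) (Set.mem_univ (0 : EuclideanSpace ℝ (Fin m)))
        ha_pos.le (by linarith : (0:ℝ) ≤ 1 - a) (by ring)
      rw [smul_zero, add_zero, smul_eq_mul, smul_eq_mul] at hcombo
      nlinarith
    -- minimize over a large closed ball
    obtain ⟨x₁, hx₁mem, hx₁min⟩ :=
      (isCompact_closedBall (0 : EuclideanSpace ℝ (Fin m)) T).exists_isMinOn
        ⟨0, by simp [hTpos.le]⟩ hgcont.continuousOn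
    have hx₁le : g x₁ ≤ g 0 := hx₁min (by simp [hTpos.le])
    have hx₁norm : ‖x₁‖ ≤ T := by
      simpa [dist_eq_norm] using Metric.mem_closedBall.mp hx₁mem
    have hlt : ‖x₁‖ < T := by
      rcases lt_or_eq_of_le hx₁norm with h12 | h12
      · exact h12
      · exact absurd hx₁le (not_le.mpr (main x₁ h12))
    have hnhds : Metric.closedBall (0 : EuclideanSpace ℝ (Fin m)) T ∈ nhds x₁ := by
      apply Filter.mem_of_superset (Metric.ball_mem_nhds x₁ (show (0:ℝ) < T - ‖x₁‖ by linarith))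
      intro z hz
      rw [Metric.mem_ball, dist_eq_norm] at hz
      rw [Metric.mem_closedBall, dist_zero_right]
      calc ‖z‖ ≤ ‖z - x₁‖ + ‖x₁‖ := by
            have := norm_add_le (z - x₁) x₁
            simpa using this
      _ ≤ T := by linarith
    have hloc : IsLocalMin g x₁ := hx₁min.isLocalMin hnhds
    have hfd := hasGradientAt_iff_hasFDerivAt.mp (hgradg x₁)
    have hzero := hloc.hasFDerivAt_eq_zero hfd
    have h0 : g' x₁ - y = 0 := by
      apply (InnerProductSpace.toDual ℝ (EuclideanSpace ℝ (Fin m))).injective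
      rw [hzero]
      simp
    exact ⟨x₁, by rwa [sub_eq_zero] at h0⟩
  apply Set.Subset.antisymm
  · rintro _ ⟨x, rfl⟩
    rw [hgradf x]
    exact fwd x
  · intro y hy
    obtain ⟨x, hx⟩ := bwd y hy
    exact ⟨x, by rw [hgradf x, hx]⟩
end

section
/- Let K ⊆ ℝ^n be compact. The set 𝓛(K) of point-evaluation functionals ℓ_v (v ∈ K) on ℝ[x]_{2d} is a compact subset of the dual space ℝ[x]_{2d}^*, contained in the affine hyperplane {ℓ : ℓ(1) = 1}, and its conical hull is a closed convex cone. -/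
open MeasureTheory

/-- The space of truncated moment sequences: real sequences indexed by monomials
(exponent vectors) of total degree at most `d` in `n` variables; this is the
(coordinatized) dual space `ℝ[x]_d^*`. -/
abbrev MomSpace (n d : ℕ) := {α : Fin n →₀ ℕ // (α.sum fun _ e => e) ≤ d} → ℝ

/-- Evaluation of the monomial `x^α` at the point `v`. -/
def evalMono {n : ℕ} (v : Fin n → ℝ) (α : Fin n →₀ ℕ) : ℝ :=
  α.prod fun i k => v i ^ k

/-- The point-evaluation functional `ℓ_v` on `ℝ[x]_d`, in moment coordinates. -/
def Lmap (n d : ℕ) (v : Fin n → ℝ) : MomSpace n d := fun α => evalMono v α.1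

/-- The pairing `⟨p, y⟩` between a polynomial `p` (of degree ≤ d) and a moment
sequence `y`; it equals `ℓ(p)` for the functional `ℓ` with moments `y`. -/
noncomputable def momPair {n d : ℕ} (y : MomSpace n d)
    (p : MvPolynomial (Fin n) ℝ) : ℝ :=
  ∑ α ∈ p.support, p.coeff α *
    (if h : (α.sum fun _ e => e) ≤ d then y ⟨α, h⟩ else 0)

/-- The cone `R_{2d}(K)` of moment sequences representable by a finite Borel
measure supported on `K`. -/
def RepCone (n d : ℕ) (K : Set (Fin n → ℝ)) : Set (MomSpace n d) :=
  {y | ∃ σ : Measure (Fin n → ℝ), IsFiniteMeasure σ ∧ σ Kᶜ = 0 ∧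
    ∀ α : {α : Fin n →₀ ℕ // (α.sum fun _ e => e) ≤ d},
      y α = ∫ v in K, evalMono v α.1 ∂σ}


universe u

section Aux

instance momFinite (n d : ℕ) : Finite {α : Fin n →₀ ℕ // (α.sum fun _ e => e) ≤ d} := by
  have h : ∀ (α : {α : Fin n →₀ ℕ // (α.sum fun _ e => e) ≤ d}) (i : Fin n), α.1 i ≤ d := by
    intro α i
    by_cases hi : i ∈ α.1.support
    · calc α.1 i ≤ α.1.sum fun _ e => e :=
            Finset.single_le_sum (fun _ _ => Nat.zero_le _) hi
        _ ≤ d := α.2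
    · simp [Finsupp.notMem_support_iff.mp hi]
  apply Finite.of_injective
    (fun α : {α : Fin n →₀ ℕ // (α.sum fun _ e => e) ≤ d} =>
      (fun i => (⟨α.1 i, Nat.lt_succ_of_le (h α i)⟩ : Fin (d+1)) : Fin n → Fin (d+1)))
  intro α β hab
  apply Subtype.ext
  ext i
  have := congrFun hab i
  simpa using this

lemma mem_conicalHull_of_mem {V : Type*} [AddCommMonoid V] [Module ℝ V] {s : Set V}
    {z : V} (hz : z ∈ s) : z ∈ conicalHull s := by
  refine ⟨1, fun _ => 1, fun _ => z, fun _ => zero_le_one, fun _ => hz, ?_⟩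
  simp

lemma smul_mem_conicalHull {V : Type*} [AddCommMonoid V] [Module ℝ V] {s : Set V}
    {t : ℝ} (ht : 0 ≤ t) {y : V} (hy : y ∈ conicalHull s) : t • y ∈ conicalHull s := by
  obtain ⟨k, c, z, hc, hzs, rfl⟩ := hy
  refine ⟨k, fun i => t * c i, z, fun i => mul_nonneg ht (hc i), hzs, ?_⟩
  rw [Finset.smul_sum]
  simp [smul_smul]

lemma add_mem_conicalHull {V : Type*} [AddCommMonoid V] [Module ℝ V] {s : Set V}
    {y y' : V} (hy : y ∈ conicalHull s) (hy' : y' ∈ conicalHull s) :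
    y + y' ∈ conicalHull s := by
  obtain ⟨k, c, z, hc, hzs, rfl⟩ := hy
  obtain ⟨k', c', z', hc', hzs', rfl⟩ := hy'
  refine ⟨k + k', Fin.append c c', Fin.append z z', ?_, ?_, ?_⟩
  · intro i
    refine Fin.addCases (fun j => ?_) (fun j => ?_) i
    · simpa using hc j
    · simpa using hc' j
  · intro i
    refine Fin.addCases (fun j => ?_) (fun j => ?_) i
    · simpa using hzs j
    · simpa using hzs' j
  · rw [Fin.sum_univ_add]
    simp

lemma convex_conicalHull {V : Type*} [AddCommMonoid V] [Module ℝ V] (s : Set V) :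
    Convex ℝ (conicalHull s) := by
  intro y hy y' hy' a b ha hb _
  exact add_mem_conicalHull (smul_mem_conicalHull ha hy) (smul_mem_conicalHull hb hy')

lemma conicalHull_empty {V : Type*} [AddCommMonoid V] [Module ℝ V] :
    conicalHull (∅ : Set V) = {0} := by
  ext y
  constructor
  · rintro ⟨k, c, z, _, hzs, rfl⟩
    haveI : IsEmpty (Fin k) := ⟨fun i => (hzs i).elim⟩
    simp
  · rintro rfl
    exact ⟨0, Fin.elim0, Fin.elim0, fun i => i.elim0, fun i => i.elim0, by simp⟩

lemma isCompact_convexHull_of_isCompact_s10 {E : Type u} [NormedAddCommGroup E]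
    [NormedSpace ℝ E] [FiniteDimensional ℝ E] {s : Set E} (hs : IsCompact s) :
    IsCompact (convexHull ℝ s) := by
  rcases s.eq_empty_or_nonempty with rfl | ⟨z₀, hz₀⟩
  · simp
  classical
  set N := Module.finrank ℝ E + 1 with hN
  set F : (Fin N → ℝ) × (Fin N → E) → E := fun p => ∑ i, p.1 i • p.2 i with hF
  have hFc : Continuous F := by
    apply continuous_finset_sum
    intro i _
    exact ((continuous_apply i).comp continuous_fst).smul
      ((continuous_apply i).comp continuous_snd)
  have hD : IsCompact (stdSimplex ℝ (Fin N) ×ˢ Set.pi Set.univ fun _ : Fin N => s) :=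
    (isCompact_stdSimplex (𝕜 := ℝ) (ι := Fin N)).prod (isCompact_univ_pi fun _ => hs)
  have heq : convexHull ℝ s
      = F '' (stdSimplex ℝ (Fin N) ×ˢ Set.pi Set.univ fun _ : Fin N => s) := by
    apply Set.Subset.antisymm
    · intro x hx
      obtain ⟨ι, hι, z, w, hrange, hai, hwpos, hwsum, hwx⟩ :=
        eq_pos_convex_span_of_mem_convexHull hx
      letI := hι
      have hcard : Fintype.card ι ≤ N := by
        have h1 : Fintype.card ι ≤ Module.finrank ℝ (vectorSpan ℝ (Set.range z)) + 1 :=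
          hai.card_le_finrank_succ
        have h2 := Submodule.finrank_le (vectorSpan ℝ (Set.range z))
        omega
      set m := Fintype.card ι with hm
      set e := (Fintype.equivFin ι).symm with he
      set g : ℕ → ℝ := fun j => if h : j < m then w (e ⟨j, h⟩) else 0 with hg
      set Z : ℕ → E := fun j => if h : j < m then z (e ⟨j, h⟩) else z₀ with hZ
      have hsum1 : ∑ j : Fin N, g j = 1 := by
        have hd : ∑ j : Fin m, g ↑j = ∑ i : ι, w i := by
          refine Fintype.sum_equiv e (fun j => g ↑j) w fun j => ?_
          simp [hg, show (j : ℕ) < m from j.is_lt]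
        calc ∑ j : Fin N, g ↑j = ∑ j ∈ Finset.range N, g j := Fin.sum_univ_eq_sum_range g N
          _ = ∑ j ∈ Finset.range m, g j :=
              (Finset.sum_subset (Finset.range_subset_range.mpr hcard)
                (fun j _ hj => by simp only [hg]; exact dif_neg (by simpa using hj))).symm
          _ = ∑ j : Fin m, g ↑j := (Fin.sum_univ_eq_sum_range g m).symm
          _ = ∑ i : ι, w i := hd
          _ = 1 := hwsum
      have hsum2 : ∑ j : Fin N, g j • Z j = x := by
        have hd : ∑ j : Fin m, g ↑j • Z ↑j = ∑ i : ι, w i • z i := by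
          refine Fintype.sum_equiv e (fun j => g ↑j • Z ↑j) (fun i => w i • z i) fun j => ?_
          simp [hg, hZ, show (j : ℕ) < m from j.is_lt]
        calc ∑ j : Fin N, g ↑j • Z ↑j
            = ∑ j ∈ Finset.range N, (fun i => g i • Z i) j :=
              Fin.sum_univ_eq_sum_range (fun i => g i • Z i) N
          _ = ∑ j ∈ Finset.range m, (fun i => g i • Z i) j :=
              (Finset.sum_subset (Finset.range_subset_range.mpr hcard)
                (fun j _ hj => by
                  have h0 : g j = 0 := by
                    simp only [hg]; exact dif_neg (by simpa using hj)
                  simp [h0])).symm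
          _ = ∑ j : Fin m, g ↑j • Z ↑j :=
              (Fin.sum_univ_eq_sum_range (fun i => g i • Z i) m).symm
          _ = ∑ i : ι, w i • z i := hd
          _ = x := hwx
      refine ⟨(fun j : Fin N => g j, fun j : Fin N => Z j), ⟨⟨?_, hsum1⟩, ?_⟩, hsum2⟩
      · intro j
        simp only [hg]
        split
        · exact le_of_lt (hwpos _)
        · exact le_refl 0
      · intro j _
        simp only [hZ]
        split
        · exact hrange (Set.mem_range_self _)
        · exact hz₀
    · rintro x ⟨⟨ww, zz⟩, ⟨⟨hw0, hw1⟩, hzz⟩, rfl⟩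
      exact (convex_convexHull ℝ s).sum_mem (fun i _ => hw0 i) hw1
        (fun i _ => subset_convexHull ℝ s (hzz i (Set.mem_univ i)))
  rw [heq]
  exact hD.image hFc

end Aux

/-- For `K ⊆ ℝ^n` compact, the set `𝓛(K)` of point-evaluation functionals is
compact, lies in the affine hyperplane `{ℓ : ℓ(1) = 1}`, and its conical hull is a
closed convex cone. -/
theorem stmt10 {n d : ℕ} (K : Set (Fin n → ℝ)) (hK : IsCompact K) :
    IsCompact (Lmap n (2 * d) '' K) ∧
    (∀ y ∈ Lmap n (2 * d) '' K, momPair y (1 : MvPolynomial (Fin n) ℝ) = 1) ∧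
    Convex ℝ (conicalHull (Lmap n (2 * d) '' K)) ∧
    IsClosed (conicalHull (Lmap n (2 * d) '' K)) := by
  classical
  have hcont : Continuous (Lmap n (2 * d)) := by
    refine continuous_pi fun α => ?_
    exact continuous_finset_prod _ fun i _ => (continuous_apply i).pow _
  have hScpt : IsCompact (Lmap n (2 * d) '' K) := hK.image hcont
  set S := Lmap n (2 * d) '' K with hSdef
  have hzero : ((0 : Fin n →₀ ℕ).sum fun _ e => e) ≤ 2 * d := by simp
  set α₀ : {α : Fin n →₀ ℕ // (α.sum fun _ e => e) ≤ 2 * d} := ⟨0, hzero⟩ with hα₀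
  have hSone : ∀ z ∈ S, z α₀ = 1 := by
    rintro z ⟨v, _, rfl⟩
    simp [Lmap, evalMono, hα₀]
  have hpair : ∀ y ∈ S, momPair y (1 : MvPolynomial (Fin n) ℝ) = 1 := by
    intro y hy
    have hsup : (1 : MvPolynomial (Fin n) ℝ).support = {0} := by
      classical
      rw [show (1 : MvPolynomial (Fin n) ℝ) = MvPolynomial.monomial 0 1 from by
        simp, MvPolynomial.support_monomial]
      simp
    rw [momPair, hsup, Finset.sum_singleton]
    rw [dif_pos hzero]
    have := hSone y hy
    simp only [hα₀] at this
    simp [this]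
  refine ⟨hScpt, hpair, convex_conicalHull S, ?_⟩
  -- closedness
  rcases Set.eq_empty_or_nonempty S with hSe | ⟨z₀, hz₀⟩
  · rw [hSe, conicalHull_empty]
    exact isClosed_singleton
  haveI : Fintype {α : Fin n →₀ ℕ // (α.sum fun _ e => e) ≤ 2 * d} := Fintype.ofFinite _
  set C := convexHull ℝ S with hC
  have hCcpt : IsCompact C := isCompact_convexHull_of_isCompact_s10 hScpt
  have hCone : ∀ x ∈ C, x α₀ = 1 := by
    intro x hx
    have hsub : C ⊆ {x : MomSpace n (2 * d) | x α₀ = 1} := by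
      apply convexHull_min hSone
      intro p hp q hq a b ha hb hab
      have hp' : p α₀ = 1 := hp
      have hq' : q α₀ = 1 := hq
      show (a • p + b • q) α₀ = 1
      simp only [Pi.add_apply, Pi.smul_apply, smul_eq_mul, hp', hq', mul_one]
      exact hab
    exact hsub hx
  have hCsub : C ⊆ conicalHull S :=
    convexHull_min (fun z hz => mem_conicalHull_of_mem hz) (convex_conicalHull S)
  have hkey : conicalHull S = {y : MomSpace n (2 * d) |
      ∃ t : ℝ, ∃ x : MomSpace n (2 * d), 0 ≤ t ∧ x ∈ C ∧ y = t • x} := by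
    ext y
    constructor
    · rintro ⟨k, c, z, hc, hzs, rfl⟩
      set t := ∑ i, c i with ht
      rcases eq_or_lt_of_le (Finset.sum_nonneg fun i _ => hc i : (0:ℝ) ≤ t) with h0 | hpos
      · have hz : ∀ i, c i = 0 := by
          intro i
          have := (Finset.sum_eq_zero_iff_of_nonneg (fun i _ => hc i)).mp h0.symm
          exact this i (Finset.mem_univ i)
        refine ⟨0, z₀, le_refl 0, subset_convexHull ℝ S hz₀, ?_⟩
        simp [hz]
      · refine ⟨t, Finset.univ.centerMass c z, le_of_lt hpos, ?_, ?_⟩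
        · exact Finset.centerMass_mem_convexHull _ (fun i _ => hc i) hpos
            (fun i _ => hzs i)
        · rw [Finset.centerMass, ← ht, smul_smul, mul_inv_cancel₀ (ne_of_gt hpos), one_smul]
    · rintro ⟨t, x, ht, hx, rfl⟩
      exact smul_mem_conicalHull ht (hCsub hx)
  rw [hkey]
  apply IsSeqClosed.isClosed
  intro u y hu huy
  choose t x ht hx hxy using hu
  have hx1 : ∀ k, x k α₀ = 1 := fun k => hCone _ (hx k)
  have htk : ∀ k, u k α₀ = t k := by
    intro k
    rw [hxy k]
    simp [hx1 k]
  have htend : Filter.Tendsto t Filter.atTop (nhds (y α₀)) := by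
    have h1 : Filter.Tendsto (fun k => u k α₀) Filter.atTop (nhds (y α₀)) :=
      ((continuous_apply α₀).tendsto y).comp huy
    simpa [funext htk] using h1
  have ht0 : 0 ≤ y α₀ := ge_of_tendsto' htend ht
  obtain ⟨x₀, hx₀C, φ, hφ, hxconv⟩ := hCcpt.tendsto_subseq hx
  have h2 : Filter.Tendsto (fun k => t (φ k) • x (φ k)) Filter.atTop
      (nhds (y α₀ • x₀)) :=
    (htend.comp hφ.tendsto_atTop).smul hxconv
  have h3 : Filter.Tendsto (fun k => u (φ k)) Filter.atTop (nhds y) :=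
    huy.comp hφ.tendsto_atTop
  have h4 : (fun k => u (φ k)) = fun k => t (φ k) • x (φ k) := by
    funext k; exact hxy (φ k)
  rw [h4] at h3
  have := tendsto_nhds_unique h3 h2
  exact ⟨y α₀, x₀, ht0, hx₀C, this⟩
end

section
/- Let K ⊆ ℝ^n be compact. Then the cone R_{2d}(K) of linear functionals on ℝ[x]_{2d} representable by integration against a finite Borel measure supported on K equals the conical hull of the set of point-evaluation functionals {ℓ_v : v ∈ K}. -/
open MeasureTheory

noncomputable instance momFintype {n d : ℕ} :
    Fintype {α : Fin n →₀ ℕ // (α.sum fun _ e => e) ≤ d} := by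
  apply Fintype.ofInjective (β := Fin n → Fin (d+1))
    (fun a i => ⟨a.1 i, by
      have h1 : a.1 i ≤ a.1.sum fun _ e => e := by
        by_cases h : a.1 i = 0
        · simp [h]
        · exact Finset.single_le_sum (fun j _ => Nat.zero_le _) (Finsupp.mem_support_iff.mpr h)
      omega⟩)
  intro a b h
  ext1; ext i
  exact congrArg Fin.val (congrFun h i)

theorem continuous_evalMono {n : ℕ} (α : Fin n →₀ ℕ) :
    Continuous fun v : Fin n → ℝ => evalMono v α := by
  unfold evalMono Finsupp.prod
  exact continuous_finset_prod _ fun i _ => (continuous_apply i).pow _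

theorem continuous_Lmap (n d : ℕ) : Continuous (Lmap n d) :=
  continuous_pi fun α => continuous_evalMono α.1

theorem mem_conicalHull_of_finset {V : Type*} [AddCommMonoid V] [Module ℝ V] {s : Set V}
    {ι : Type*} (t : Finset ι) (c : ι → ℝ) (z : ι → V)
    (hc : ∀ i ∈ t, 0 ≤ c i) (hz : ∀ i ∈ t, z i ∈ s) :
    (∑ i ∈ t, c i • z i) ∈ conicalHull s := by
  classical
  refine ⟨t.card, fun j => c (t.equivFin.symm j), fun j => z (t.equivFin.symm j),
    fun j => hc _ (t.equivFin.symm j).2, fun j => hz _ (t.equivFin.symm j).2, ?_⟩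
  rw [Equiv.sum_comp t.equivFin.symm (fun i : t => c i • z i)]
  exact (t.sum_coe_sort fun i => c i • z i).symm

theorem myIsCompact_convexHull {E : Type*} [NormedAddCommGroup E] [NormedSpace ℝ E]
    [FiniteDimensional ℝ E] {s : Set E} (hs : IsCompact s) :
    IsCompact (convexHull ℝ s) := by
  classical
  set D := Module.finrank ℝ E + 1 with hD
  have key : convexHull ℝ s =
      ⋃ k ∈ Finset.range (D + 1),
        (fun p : (Fin k → ℝ) × (Fin k → E) => ∑ i, p.1 i • p.2 i) ''
          (stdSimplex ℝ (Fin k) ×ˢ Set.univ.pi fun _ => s) := by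
    apply Set.Subset.antisymm
    · intro x hx
      obtain ⟨ι, hfin, z, w, hzs, hai, hw0, hw1, hwz⟩ :=
        eq_pos_convex_span_of_mem_convexHull hx
      have hcard : Fintype.card ι ≤ D :=
        hai.card_le_finrank_succ.trans (Nat.add_le_add_right (Submodule.finrank_le _) 1)
      refine Set.mem_biUnion (Finset.mem_range.mpr (Nat.lt_succ_of_le hcard)) ?_
      set e := Fintype.equivFin ι
      refine ⟨(w ∘ e.symm, z ∘ e.symm), ⟨?_, ?_⟩, ?_⟩
      · refine ⟨fun i => (hw0 _).le, ?_⟩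
        show ∑ i, w (e.symm i) = 1
        rw [Equiv.sum_comp e.symm w]; exact hw1
      · intro i _
        exact hzs (Set.mem_range_self _)
      · show (∑ i, w (e.symm i) • z (e.symm i)) = x
        rw [Equiv.sum_comp e.symm (fun i => w i • z i)]; exact hwz
    · refine Set.iUnion₂_subset fun k _ => ?_
      rintro x ⟨⟨w, z⟩, ⟨⟨hw0, hw1⟩, hz⟩, rfl⟩
      exact (convex_convexHull ℝ s).sum_mem (fun i _ => hw0 i) hw1
        fun i _ => subset_convexHull ℝ s (hz i (Set.mem_univ i))
  rw [key]
  apply Finset.isCompact_biUnion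
  intro k _
  apply IsCompact.image
  · exact (IsCompact.prod (isCompact_stdSimplex (𝕜 := ℝ) (ι := Fin k)) (isCompact_univ_pi fun _ => hs))
  · exact continuous_finset_sum _ fun i _ =>
      ((continuous_apply i).comp continuous_fst).smul ((continuous_apply i).comp continuous_snd)

/-- Lemma 3.1: for `K ⊆ ℝ^n` compact, the cone of moment sequences representable by a
finite Borel measure on `K` equals the conical hull of the point evaluations
`{ℓ_v : v ∈ K}`. -/
theorem stmt11 {n d : ℕ} (K : Set (Fin n → ℝ)) (hK : IsCompact K) :
    RepCone n (2 * d) K = conicalHull (Lmap n (2 * d) '' K) := by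
  classical
  have mK : MeasurableSet K := hK.isClosed.measurableSet
  ext y
  constructor
  · rintro ⟨σ, hfin, hcompl, hmom⟩
    set L := Lmap n (2 * d) with hL
    set τ := σ.restrict K with hτ
    have hInt : Integrable L τ :=
      (continuous_Lmap n (2 * d)).continuousOn.integrableOn_compact hK
    have hy : y = ∫ v, L v ∂τ := by
      funext α
      rw [hmom α]
      exact (ContinuousLinearMap.proj (R := ℝ) (φ := fun _ => ℝ)
        α).integral_comp_comm hInt
    by_cases h0 : σ K = 0
    · have hτ0 : τ = 0 := Measure.restrict_eq_zero.mpr h0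
      have : y = 0 := by rw [hy, hτ0, integral_zero_measure]
      refine ⟨0, Fin.elim0, Fin.elim0, fun i => i.elim0, fun i => i.elim0, ?_⟩
      simp [this]
    · have hne_top : σ K ≠ ⊤ := measure_ne_top σ K
      set μ := (σ K)⁻¹ • τ with hμ
      have hprob : IsProbabilityMeasure μ := by
        constructor
        rw [hμ, Measure.smul_apply, hτ, Measure.restrict_apply_univ, smul_eq_mul]
        exact ENNReal.inv_mul_cancel h0 hne_top
      have hIntμ : Integrable L μ :=
        hInt.smul_measure (ENNReal.inv_ne_top.mpr h0)
      have haem : ∀ᵐ x ∂μ, L x ∈ convexHull ℝ (L '' K) := by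
        have h1 : ∀ᵐ x ∂τ, L x ∈ convexHull ℝ (L '' K) := by
          filter_upwards [ae_restrict_mem mK] with x hx
          exact subset_convexHull ℝ _ (Set.mem_image_of_mem _ hx)
        exact Measure.ae_smul_measure h1 _
      have hmem : (∫ x, L x ∂μ) ∈ convexHull ℝ (L '' K) :=
        (convex_convexHull ℝ _).integral_mem
          (myIsCompact_convexHull (hK.image (continuous_Lmap n (2 * d)))).isClosed haem hIntμ
      have hint_eq : ∫ x, L x ∂μ = ((σ K).toReal)⁻¹ • y := by
        rw [hμ, integral_smul_measure, ENNReal.toReal_inv, hy]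
      have hy2 : y = (σ K).toReal • ∫ x, L x ∂μ := by
        rw [hint_eq, smul_smul, mul_inv_cancel₀, one_smul]
        exact ENNReal.toReal_ne_zero.mpr ⟨h0, hne_top⟩
      rw [convexHull_eq] at hmem
      obtain ⟨ι, t, w, z, hw0, hw1, hzs, hcm⟩ := hmem
      have hcm' : ∑ i ∈ t, w i • z i = ∫ x, L x ∂μ := by
        rw [← hcm, Finset.centerMass, hw1, inv_one, one_smul]
      have hy3 : y = ∑ i ∈ t, ((σ K).toReal * w i) • z i := by
        rw [hy2, ← hcm', Finset.smul_sum]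
        simp [smul_smul]
      rw [hy3]
      exact mem_conicalHull_of_finset t _ z
        (fun i hi => mul_nonneg ENNReal.toReal_nonneg (hw0 i hi)) hzs
  · rintro ⟨k, c, z, hc, hz, rfl⟩
    choose v hvK hvz using fun i => hz i
    set σ : Measure (Fin n → ℝ) :=
      ∑ i : Fin k, ENNReal.ofReal (c i) • Measure.dirac (v i) with hσ
    have hσs : ∀ s : Set (Fin n → ℝ),
        σ s = ∑ i : Fin k, ENNReal.ofReal (c i) * Measure.dirac (v i) s := by
      intro s
      rw [hσ, Measure.finset_sum_apply]
      simp [Measure.smul_apply, smul_eq_mul]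
    have hcompl : σ Kᶜ = 0 := by
      rw [hσs]
      apply Finset.sum_eq_zero
      intro i _
      rw [Measure.dirac_apply' _ mK.compl]
      simp [Set.indicator_of_notMem, hvK i]
    refine ⟨σ, ?_, hcompl, ?_⟩
    · constructor
      rw [hσs]
      refine ENNReal.sum_lt_top.mpr fun i _ => ?_
      simp [ENNReal.ofReal_lt_top, ENNReal.mul_lt_top, measure_univ]
    · intro α
      have hrestr : σ.restrict K = σ :=
        Measure.restrict_eq_self_of_ae_mem
          ((ae_iff (p := fun x => x ∈ K)).mpr (by exact hcompl))
      have hms : StronglyMeasurable fun w => evalMono w α.1 :=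
        (continuous_evalMono α.1).stronglyMeasurable
      have hInti : ∀ i : Fin k,
          Integrable (fun w => evalMono w α.1)
            (ENNReal.ofReal (c i) • Measure.dirac (v i)) := by
        intro i
        have hd : Integrable (fun w => evalMono w α.1) (Measure.dirac (v i)) :=
          (integrable_const _).congr (ae_eq_dirac' hms.measurable).symm
        exact hd.smul_measure ENNReal.ofReal_ne_top
      calc (∑ i, c i • z i) α
          = (∑ i, c i • Lmap n (2 * d) (v i)) α := by simp only [← hvz]
        _
          = ∑ i, c i * evalMono (v i) α.1 := by
            simp [Lmap]
        _ = ∫ w in K, evalMono w α.1 ∂σ := by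
            rw [show (∫ w in K, evalMono w α.1 ∂σ) = ∫ w, evalMono w α.1 ∂σ by
              rw [hrestr]]
            rw [hσ, integral_finset_sum_measure (fun i _ => hInti i)]
            congr 1
            funext i
            rw [integral_smul_measure, integral_dirac' _ _ hms,
              ENNReal.toReal_ofReal (hc i), smul_eq_mul]
end
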